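/- arXiv:0704.3843 — 8 statements merged into one kernel-verified Lean document; each statement's English description precedes it below -/
import Mathlib

section
/- A finite multigraph G on n vertices with m edges decomposes into k edge-disjoint maps if and only if m = kn and G is (k,0)-sparse, i.e., every subset V' of vertices spans at most k|V'| edges. -/
open scoped Classical

noncomputable section

/- We model a finite multigraph as a vertex type `V`, an edge (index) type `E`,
and an endpoint map `ends : E → Sym2 V`; loops are edges whose endpoints form a
diagonal unordered pair.  A (sub)graph is given by a `Finset` of edge indices. -/

variable {V E : Type*}

/-- The edges of `F` all of whose endpoints lie in `S`. -/
def spanned (ends : E → Sym2 V) (F : Finset E) (S : Finset V) : Finset E :=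
  F.filter (fun e => ∀ v ∈ ends e, v ∈ S)

/-- `(k,l)`-sparsity: every nonempty vertex subset `S` spans at most `k|S| - l` edges. -/
def Sparse (ends : E → Sym2 V) (F : Finset E) (k l : ℕ) : Prop :=
  ∀ S : Finset V, S.Nonempty → (spanned ends F S).card + l ≤ k * S.card

/-- The edge set `P` is a map (spanning the whole vertex set): it admits an
orientation (choice of a tail vertex among the endpoints of each edge) with
out-degree exactly `1` at every vertex. -/
def IsMapOn (ends : E → Sym2 V) (P : Finset E) : Prop :=
  ∃ tail : E → V, (∀ e ∈ P, tail e ∈ ends e) ∧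
    ∀ v : V, (P.filter (fun e => tail e = v)).card = 1

/-- The edge set `F` decomposes into `k` edge-disjoint maps. -/
def IsKMap (ends : E → Sym2 V) (F : Finset E) (k : ℕ) : Prop :=
  ∃ col : E → Fin k, ∀ i : Fin k, IsMapOn ends (F.filter (fun e => col e = i))

/-- Underlying simple graph of the edge set `F` (loops and multiplicities dropped). -/
def underGraph (ends : E → Sym2 V) (F : Finset E) : SimpleGraph V :=
  SimpleGraph.fromRel (fun u w => ∃ e ∈ F, ends e = s(u, w))

/-- `P` is a spanning pseudoforest: within each connected component, the number
of edges is at most the number of vertices (i.e. at most one cycle per component). -/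
def IsPseudoforest [Fintype V] (ends : E → Sym2 V) (P : Finset E) : Prop :=
  ∀ v : V,
    (P.filter (fun e => ∀ u ∈ ends e,
        (underGraph ends P).connectedComponentMk u =
          (underGraph ends P).connectedComponentMk v)).card ≤
      (Finset.univ.filter (fun u : V =>
        (underGraph ends P).connectedComponentMk u =
          (underGraph ends P).connectedComponentMk v)).card

/-- `P` is a spanning tree: connected underlying graph with `n - 1` edges
(counted with multiplicity). -/
def IsSpanningTree [Fintype V] (ends : E → Sym2 V) (P : Finset E) : Prop :=
  (underGraph ends P).Connected ∧ P.card + 1 = Fintype.card V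

/-- Edge type of `K_n^{k,2k}`: `2k` parallel edges between each pair of distinct
vertices and `k` loops at each vertex. -/
abbrev KEdge (V : Type*) (k : ℕ) := {p : Sym2 V × Fin (2 * k) // p.1.IsDiag → (p.2 : ℕ) < k}

/-- Endpoints of an edge of `K_n^{k,2k}`. -/
def kends {V : Type*} {k : ℕ} : KEdge V k → Sym2 V := fun p => p.1.1

/-- `G` decomposes into `k` edge-disjoint maps iff `m = kn` and `G` is `(k,0)`-sparse. -/
theorem stmt1 [Fintype V] [Fintype E] (k : ℕ) (ends : E → Sym2 V) :
    IsKMap ends (Finset.univ : Finset E) k ↔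
      (Fintype.card E = k * Fintype.card V ∧ Sparse ends Finset.univ k 0) := by
  constructor
  · rintro ⟨col, hcol⟩
    constructor
    · -- m = k n
      have h1 : (Finset.univ : Finset E).card =
          ∑ i : Fin k, (Finset.univ.filter (fun e => col e = i)).card :=
        Finset.card_eq_sum_card_fiberwise (fun e _ => Finset.mem_univ (col e))
      have h2 : ∀ i : Fin k,
          (Finset.univ.filter (fun e => col e = i)).card = Fintype.card V := by
        intro i
        obtain ⟨t, _, h1c⟩ := hcol i
        rw [Finset.card_eq_sum_card_fiberwise
          (fun e (_ : e ∈ Finset.univ.filter (fun e => col e = i)) => Finset.mem_univ (t e))]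
        simp only [h1c, Finset.sum_const, smul_eq_mul, mul_one, Finset.card_univ]
      have : Fintype.card E = (Finset.univ : Finset E).card := rfl
      rw [this, h1]
      simp [h2, mul_comm]
    · intro S _
      simp only [add_zero]
      have hsp : (spanned ends Finset.univ S).card =
          ∑ i : Fin k, ((spanned ends Finset.univ S).filter (fun e => col e = i)).card :=
        Finset.card_eq_sum_card_fiberwise (fun e _ => Finset.mem_univ (col e))
      rw [hsp]
      have hb : ∀ i : Fin k,
          ((spanned ends Finset.univ S).filter (fun e => col e = i)).card ≤ S.card := by
        intro i
        obtain ⟨t, ht, h1c⟩ := hcol i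
        apply Finset.card_le_card_of_injOn t
        · intro e he
          simp only [Finset.mem_coe, spanned, Finset.mem_filter, Finset.mem_univ, true_and] at he
          exact he.1 _ (ht e (by simp [he.2]))
        · intro e1 h1 e2 h2 heq
          simp only [Finset.coe_filter, Set.mem_setOf_eq, spanned, Finset.mem_filter,
            Finset.mem_univ, true_and] at h1 h2
          have hc := h1c (t e1)
          have m1 : e1 ∈ (Finset.univ.filter (fun e => col e = i)).filter
              (fun e => t e = t e1) := by simp [h1.2]
          have m2 : e2 ∈ (Finset.univ.filter (fun e => col e = i)).filter
              (fun e => t e = t e1) := by simp [h2.2, heq]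
          exact Finset.card_le_one.mp hc.le e1 m1 e2 m2
      calc ∑ i : Fin k, ((spanned ends Finset.univ S).filter (fun e => col e = i)).card
          ≤ ∑ _i : Fin k, S.card := Finset.sum_le_sum (fun i _ => hb i)
        _ = k * S.card := by simp [mul_comm]
  · rintro ⟨hm, hs⟩
    set t : E → Finset (V × Fin k) :=
      fun e => Finset.univ.filter (fun p => p.1 ∈ ends e) with ht
    have hall : ∀ s : Finset E, s.card ≤ (s.biUnion t).card := by
      intro s
      rcases s.eq_empty_or_nonempty with rfl | hns
      · simp
      set S : Finset V := Finset.univ.filter (fun v => ∃ e ∈ s, v ∈ ends e) with hSdef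
      have hSne : S.Nonempty := by
        obtain ⟨e, he⟩ := hns
        refine ⟨(ends e).out.1, ?_⟩
        simp only [hSdef, Finset.mem_filter, Finset.mem_univ, true_and]
        exact ⟨e, he, Sym2.out_fst_mem _⟩
      have h1 : s ⊆ spanned ends Finset.univ S := by
        intro e he
        simp only [spanned, Finset.mem_filter, Finset.mem_univ, true_and, hSdef]
        exact fun v hv => ⟨e, he, hv⟩
      have h2 : s.biUnion t = S ×ˢ (Finset.univ : Finset (Fin k)) := by
        ext p
        simp only [Finset.mem_biUnion, ht, Finset.mem_filter, Finset.mem_univ, true_and,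
          Finset.mem_product, hSdef]
        constructor
        · rintro ⟨e, he, hpe⟩; exact ⟨⟨e, he, hpe⟩, trivial⟩
        · rintro ⟨⟨e, he, hpe⟩, -⟩; exact ⟨e, he, hpe⟩
      calc s.card ≤ (spanned ends Finset.univ S).card := Finset.card_le_card h1
        _ ≤ k * S.card := by have := hs S hSne; omega
        _ = (s.biUnion t).card := by
            rw [h2, Finset.card_product]; simp [mul_comm]
    obtain ⟨f, hfinj, hft⟩ := (Finset.all_card_le_biUnion_card_iff_exists_injective t).mp hall
    have hcard : Fintype.card E = Fintype.card (V × Fin k) := by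
      simp [hm, mul_comm]
    have hfbij : Function.Bijective f :=
      (Fintype.bijective_iff_injective_and_card f).mpr ⟨hfinj, hcard⟩
    set g := Equiv.ofBijective f hfbij with hg
    refine ⟨fun e => (f e).2, fun i => ⟨fun e => (f e).1, ?_, ?_⟩⟩
    · intro e _
      have := hft e
      simp only [ht, Finset.mem_filter, Finset.mem_univ, true_and] at this
      exact this
    · intro v
      have hset : (Finset.univ.filter (fun e => (f e).2 = i)).filter (fun e => (f e).1 = v)
          = {g.symm (v, i)} := by
        ext e
        simp only [Finset.mem_filter, Finset.mem_univ, true_and, Finset.mem_singleton,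
          Equiv.eq_symm_apply, hg, Equiv.ofBijective_apply, Prod.mk.injEq]
        aesop
      rw [hset, Finset.card_singleton]
end
end

section
/- Let G be a finite multigraph on n vertices. G is (k,0)-tight (that is, G has exactly kn edges and every vertex subset V' spans at most k|V'| edges) if and only if the bipartite graph B_k(G), whose vertex classes are the edge set E of G and k disjoint copies of V, with each edge-vertex e joined to the k copies of each of its endpoints, contains a perfect matching saturating E. -/
open scoped Classical

noncomputable section

/- We model a finite multigraph as a vertex type `V`, an edge (index) type `E`,
and an endpoint map `ends : E → Sym2 V`; loops are edges whose endpoints form a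
diagonal unordered pair.  A (sub)graph is given by a `Finset` of edge indices. -/

variable {V E : Type*}

/-- `G` is `(k,0)`-tight iff the bipartite incidence graph `B_k(G)` (edge class `E`,
vertex class `V × Fin k`, each edge-vertex joined to the `k` copies of its endpoints)
has a perfect matching saturating `E`, i.e. a bijection `M : E → V × Fin k`
matching each edge to a copy of one of its endpoints. -/
theorem stmt2 [Fintype V] [Fintype E] (k : ℕ) (ends : E → Sym2 V) :
    (Fintype.card E = k * Fintype.card V ∧ Sparse ends Finset.univ k 0) ↔
      ∃ M : E → V × Fin k, Function.Bijective M ∧ ∀ e : E, (M e).1 ∈ ends e := by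
  classical
  constructor
  · rintro ⟨hcard, hsp⟩
    have hall : ∀ A : Finset E, A.card ≤ (A.biUnion (fun e : E =>
        Finset.univ.filter (fun p : V × Fin k => p.1 ∈ ends e))).card := by
      intro A
      rcases A.eq_empty_or_nonempty with rfl | hA
      · simp
      set S : Finset V := Finset.univ.filter (fun v => ∃ e ∈ A, v ∈ ends e) with hS
      have hbu : A.biUnion (fun e : E =>
          Finset.univ.filter (fun p : V × Fin k => p.1 ∈ ends e)) = S ×ˢ Finset.univ := by
        ext p
        simp [hS, Finset.mem_biUnion]
      have hSne : S.Nonempty := by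
        obtain ⟨e, he⟩ := hA
        exact ⟨(ends e).out.1, by simp [hS]; exact ⟨e, he, Sym2.out_fst_mem _⟩⟩
      have hsub : A ⊆ spanned ends Finset.univ S := by
        intro e he
        simp only [spanned, Finset.mem_filter, Finset.mem_univ, true_and]
        intro v hv
        simp [hS]
        exact ⟨e, he, hv⟩
      calc A.card ≤ (spanned ends Finset.univ S).card := Finset.card_le_card hsub
        _ ≤ k * S.card := by simpa using hsp S hSne
        _ = (S ×ˢ (Finset.univ : Finset (Fin k))).card := by
            simp [Finset.card_product, Nat.mul_comm]
        _ = _ := by rw [hbu]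
    obtain ⟨f, hfinj, hf⟩ := (Finset.all_card_le_biUnion_card_iff_exists_injective
      (fun e : E => Finset.univ.filter (fun p : V × Fin k => p.1 ∈ ends e))).mp hall
    have hcard' : Fintype.card E = Fintype.card (V × Fin k) := by
      simp [hcard, Nat.mul_comm]
    exact ⟨f, (Fintype.bijective_iff_injective_and_card f).mpr ⟨hfinj, hcard'⟩,
      fun e => by simpa using hf e⟩
  · rintro ⟨M, ⟨Minj, Msurj⟩, hM⟩
    constructor
    · have := Fintype.card_of_bijective ⟨Minj, Msurj⟩
      simpa [Nat.mul_comm] using this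
    · intro S hS
      have hmaps : ∀ e ∈ spanned ends Finset.univ S, M e ∈ S ×ˢ (Finset.univ : Finset (Fin k)) := by
        intro e he
        simp only [spanned, Finset.mem_filter] at he
        exact Finset.mem_product.mpr ⟨he.2 _ (hM e), Finset.mem_univ _⟩
      have := Finset.card_le_card_of_injOn M hmaps (Function.Injective.injOn Minj)
      simpa [Finset.card_product, Nat.mul_comm] using this
end
end

section
/- Let 0 ≤ ℓ ≤ 2k-1 and let G = (V,E) be a finite multigraph on n vertices with exactly kn - ℓ edges. Then G is (k,0)-sparse if and only if there exists a set of ℓ edges whose addition to G yields a graph that decomposes into k edge-disjoint maps. -/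
open scoped Classical

noncomputable section

/- We model a finite multigraph as a vertex type `V`, an edge (index) type `E`,
and an endpoint map `ends : E → Sym2 V`; loops are edges whose endpoints form a
diagonal unordered pair.  A (sub)graph is given by a `Finset` of edge indices. -/

variable {V E : Type*}

/-- For `G` with `kn - l` edges (`0 ≤ l ≤ 2k-1`): `G` is `(k,0)`-sparse iff some `l`
added edges (arbitrary loops or parallel edges on `V`, modeled by `Fin l → Sym2 V`)
yield a graph decomposing into `k` edge-disjoint maps. -/
theorem stmt4 [Fintype V] [Fintype E] (k l : ℕ) (hl : l ≤ 2 * k - 1)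
    (ends : E → Sym2 V) (hcard : Fintype.card E + l = k * Fintype.card V) :
    Sparse ends Finset.univ k 0 ↔
      ∃ newEnds : Fin l → Sym2 V,
        IsKMap (Sum.elim ends newEnds) (Finset.univ : Finset (E ⊕ Fin l)) k := by

  constructor
  · -- forward: sparse → k-map after adding l edges
    intro hsp
    -- Hall's condition
    have hall : ∀ s : Finset E, s.card ≤
        (s.biUnion (fun e => (Finset.univ.filter (· ∈ ends e)) ×ˢ
          (Finset.univ : Finset (Fin k)))).card := by
      intro s
      rcases s.eq_empty_or_nonempty with rfl | hs
      · simp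
      · set T : Finset V := Finset.univ.filter (fun v => ∃ e ∈ s, v ∈ ends e) with hTdef
        have hsub : s ⊆ spanned ends Finset.univ T := by
          intro e he
          simp only [spanned, Finset.mem_filter, Finset.mem_univ, true_and, hTdef]
          intro v hv
          exact ⟨e, he, hv⟩
        have hbi : s.biUnion (fun e => (Finset.univ.filter (· ∈ ends e)) ×ˢ
            (Finset.univ : Finset (Fin k))) = T ×ˢ (Finset.univ : Finset (Fin k)) := by
          ext ⟨v, i⟩
          simp [hTdef]
        have hTne : T.Nonempty := by
          obtain ⟨e, he⟩ := hs
          refine ⟨(ends e).out.1, ?_⟩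
          simp only [hTdef, Finset.mem_filter, Finset.mem_univ, true_and]
          exact ⟨e, he, Sym2.out_fst_mem _⟩
        calc s.card ≤ (spanned ends Finset.univ T).card := Finset.card_le_card hsub
          _ ≤ k * T.card := by simpa using hsp T hTne
          _ = (T ×ˢ (Finset.univ : Finset (Fin k))).card := by
              simp [Finset.card_product, mul_comm]
          _ = _ := by rw [hbi]
    obtain ⟨f, finj, hf⟩ := (Finset.all_card_le_biUnion_card_iff_existsInjective' _).mp hall
    have hfe : ∀ e, (f e).1 ∈ ends e := by
      intro e
      have := hf e
      simp only [Finset.mem_product, Finset.mem_filter, Finset.mem_univ, true_and] at this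
      exact this.1
    -- extend f to a bijection g : E ⊕ Fin l → V × Fin k
    have hcE : Fintype.card E ≤ k * Fintype.card V := by omega
    have hcompl : Fintype.card ((Set.range f)ᶜ : Set (V × Fin k)) = l := by
      rw [Fintype.card_compl_set, Set.card_range_of_injective finj]
      simp only [Fintype.card_prod, Fintype.card_fin]
      have hmc : Fintype.card V * k = k * Fintype.card V := mul_comm _ _
      omega
    let eqv : Fin l ≃ ((Set.range f)ᶜ : Set (V × Fin k)) :=
      Fintype.equivOfCardEq (by simp [hcompl])
    let g : E ⊕ Fin l → V × Fin k := Sum.elim f (fun i => (eqv i : V × Fin k))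
    have ginj : Function.Injective g := by
      rintro (e₁ | i₁) (e₂ | i₂) h
      · exact congrArg Sum.inl (finj h)
      · exact absurd ⟨e₁, h⟩ (eqv i₂).2
      · exact absurd ⟨e₂, h.symm⟩ (eqv i₁).2
      · exact congrArg Sum.inr (eqv.injective (Subtype.ext h))
    have gbij : Function.Bijective g := by
      rw [Fintype.bijective_iff_injective_and_card]
      refine ⟨ginj, ?_⟩
      simp only [Fintype.card_sum, Fintype.card_prod, Fintype.card_fin]
      have hmc : Fintype.card V * k = k * Fintype.card V := mul_comm _ _
      omega
    refine ⟨fun i => s((g (Sum.inr i)).1, (g (Sum.inr i)).1), fun x => (g x).2, fun i => ?_⟩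
    refine ⟨fun x => (g x).1, ?_, ?_⟩
    · rintro (e | j) _
      · exact hfe e
      · exact Sym2.mem_mk_left _ _
    · intro v
      rw [Finset.filter_filter]
      obtain ⟨x₀, hx₀⟩ := gbij.surjective (v, i)
      rw [Finset.card_eq_one]
      refine ⟨x₀, ?_⟩
      ext x
      simp only [Finset.mem_filter, Finset.mem_univ, true_and, Finset.mem_singleton]
      constructor
      · rintro ⟨h1, h2⟩
        exact gbij.injective (by rw [hx₀]; exact Prod.ext h2 h1)
      · rintro rfl
        exact ⟨congrArg Prod.snd hx₀, congrArg Prod.fst hx₀⟩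
  · -- backward: k-map → sparse
    rintro ⟨newEnds, col, hcol⟩ S hS
    rw [add_zero]
    set ends' : E ⊕ Fin l → Sym2 V := Sum.elim ends newEnds with hE'
    have step1 : (spanned ends Finset.univ S).card ≤
        (spanned ends' Finset.univ S).card := by
      apply Finset.card_le_card_of_injOn Sum.inl
      · intro e he
        simp only [spanned, Finset.mem_filter, Finset.mem_univ, true_and] at he ⊢
        simpa [hE'] using he
      · intro a _ b _ h
        exact Sum.inl_injective h
    have step2 : (spanned ends' Finset.univ S).card =
        ∑ i : Fin k, ((spanned ends' Finset.univ S).filter (fun e => col e = i)).card :=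
      Finset.card_eq_sum_card_fiberwise (fun x _ => Finset.mem_univ (col x))
    have step3 : ∀ i : Fin k,
        ((spanned ends' Finset.univ S).filter (fun e => col e = i)).card ≤ S.card := by
      intro i
      obtain ⟨tail, htail, hdeg⟩ := hcol i
      set t := (spanned ends' Finset.univ S).filter (fun e => col e = i) with ht
      have htS : ∀ x ∈ t, tail x ∈ S := by
        intro x hx
        simp only [ht, spanned, Finset.mem_filter, Finset.mem_univ, true_and] at hx
        exact hx.1 _ (htail x (by simp [hx.2]))
      rw [Finset.card_eq_sum_card_fiberwise htS]
      calc ∑ v ∈ S, (t.filter (fun e => tail e = v)).card ≤ ∑ _v ∈ S, 1 := by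
            apply Finset.sum_le_sum
            intro v _
            calc (t.filter (fun e => tail e = v)).card ≤
                ((Finset.univ.filter (fun e => col e = i)).filter
                  (fun e => tail e = v)).card := by
                  apply Finset.card_le_card
                  apply Finset.filter_subset_filter
                  intro x hx
                  simp only [ht, Finset.mem_filter] at hx ⊢
                  exact ⟨Finset.mem_univ _, hx.2⟩
              _ = 1 := hdeg v
        _ = S.card := by simp
    calc (spanned ends Finset.univ S).card ≤ (spanned ends' Finset.univ S).card := step1
      _ = ∑ i : Fin k, _ := step2
      _ ≤ ∑ _i : Fin k, S.card := Finset.sum_le_sum (fun i _ => step3 i)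
      _ = k * S.card := by simp [mul_comm]
end
end

section
/- Let G be a finite multigraph that is (k,0)-sparse but not (k,0)-tight. Then G contains a unique maximal (k,0)-tight subgraph H (possibly empty), and any edge with at least one endpoint outside V(H) can be added to G while preserving (k,0)-sparsity. -/
open scoped Classical

noncomputable section

/- We model a finite multigraph as a vertex type `V`, an edge (index) type `E`,
and an endpoint map `ends : E → Sym2 V`; loops are edges whose endpoints form a
diagonal unordered pair.  A (sub)graph is given by a `Finset` of edge indices. -/

variable {V E : Type*}

lemma spanned_empty (ends : E → Sym2 V) (F : Finset E) :
    spanned ends F (∅ : Finset V) = ∅ := by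
  ext e
  simp only [spanned, Finset.mem_filter, Finset.notMem_empty, iff_false, not_and]
  intro _
  intro h
  exact h _ (Sym2.out_fst_mem (ends e))

lemma tight_union [Fintype E] (k : ℕ) (ends : E → Sym2 V)
    (hs : Sparse ends Finset.univ k 0) (S T : Finset V)
    (hS : (spanned ends Finset.univ S).card = k * S.card)
    (hT : (spanned ends Finset.univ T).card = k * T.card) :
    (spanned ends Finset.univ (S ∪ T)).card = k * (S ∪ T).card := by
  rcases (S ∪ T).eq_empty_or_nonempty with h | h
  · simp [h, spanned_empty]
  · have hup := hs _ h
    have hsub : spanned ends Finset.univ S ∪ spanned ends Finset.univ T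
        ⊆ spanned ends Finset.univ (S ∪ T) := by
      intro e he
      simp only [spanned, Finset.mem_union, Finset.mem_filter, Finset.mem_univ,
        true_and] at he ⊢
      rcases he with h1 | h1 <;> intro v hv <;> simp [h1 v hv]
    have hint : spanned ends Finset.univ S ∩ spanned ends Finset.univ T
        = spanned ends Finset.univ (S ∩ T) := by
      ext e
      simp only [spanned, Finset.mem_inter, Finset.mem_filter, Finset.mem_univ, true_and]
      constructor
      · rintro ⟨h1, h2⟩ v hv; exact ⟨h1 v hv, h2 v hv⟩
      · intro h1; exact ⟨fun v hv => (h1 v hv).1, fun v hv => (h1 v hv).2⟩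
    have hcap : (spanned ends Finset.univ (S ∩ T)).card ≤ k * (S ∩ T).card := by
      rcases (S ∩ T).eq_empty_or_nonempty with h' | h'
      · simp [h', spanned_empty]
      · have := hs _ h'; omega
    have h1 := Finset.card_union_add_card_inter (spanned ends Finset.univ S)
      (spanned ends Finset.univ T)
    have h2 := Finset.card_union_add_card_inter S T
    have h3 := Finset.card_le_card hsub
    rw [hint] at h1
    have h4 : k * (S ∪ T).card + k * (S ∩ T).card = k * S.card + k * T.card := by
      rw [← Nat.mul_add, ← Nat.mul_add, h2]
    omega

/-- A `(k,0)`-sparse but not tight graph has a unique maximal `(k,0)`-tight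
(induced) subgraph, on vertex set `W` (possibly empty); and any edge with an
endpoint outside `W` can be added preserving `(k,0)`-sparsity. -/
theorem stmt5 [Fintype V] [Fintype E] (k : ℕ) (ends : E → Sym2 V)
    (hs : Sparse ends Finset.univ k 0)
    (hnt : Fintype.card E ≠ k * Fintype.card V) :
    ∃ W : Finset V,
      (spanned ends Finset.univ W).card = k * W.card ∧
      (∀ S : Finset V, (spanned ends Finset.univ S).card = k * S.card → S ⊆ W) ∧
      ∀ a : Sym2 V, (∃ v ∈ a, v ∉ W) →
        Sparse (Sum.elim ends (fun _ : Unit => a))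
          (Finset.univ : Finset (E ⊕ Unit)) k 0 := by
  classical
  set tight : Finset V → Prop :=
    fun S => (spanned ends Finset.univ S).card = k * S.card with htight
  set 𝓕 : Finset (Finset V) := Finset.univ.filter tight with h𝓕
  set W : Finset V := 𝓕.sup id with hW
  have hWt : tight W := by
    apply Finset.sup_induction
    · show tight ∅
      simp only [htight]
      simp [spanned_empty]
    · intro s hsS t htT
      exact tight_union k ends hs s t hsS htT
    · intro i hi
      simpa [h𝓕, htight] using (Finset.mem_filter.mp hi).2
  have hmax : ∀ S : Finset V, tight S → S ⊆ W := by
    intro S hSt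
    have hmem : S ∈ 𝓕 := by
      rw [h𝓕]; exact Finset.mem_filter.mpr ⟨Finset.mem_univ S, hSt⟩
    exact Finset.le_sup (f := (id : Finset V → Finset V)) hmem
  refine ⟨W, hWt, hmax, ?_⟩
  intro a ⟨v, hva, hvW⟩
  intro S hSne
  have hcard : (spanned (Sum.elim ends fun _ : Unit => a) Finset.univ S).card
      = (spanned ends Finset.univ S).card + (if ∀ u ∈ a, u ∈ S then 1 else 0) := by
    simp only [spanned, Finset.card_filter]
    rw [Fintype.sum_sum_type]
    simp
    congr
  have hup := hs S hSne
  rw [hcard]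
  by_cases hall : ∀ u ∈ a, u ∈ S
  · have hvS : v ∈ S := hall v hva
    have hSnt : ¬ tight S := fun h => hvW (hmax S h hvS)
    simp only [htight] at hSnt
    rw [if_pos hall]
    omega
  · rw [if_neg hall]
    omega
end
end

section
/- Let 0 ≤ ℓ ≤ k and let G be a finite multigraph on n vertices with exactly kn - ℓ edges. Then G is (k,ℓ)-sparse if and only if G decomposes into ℓ edge-disjoint spanning trees and k - ℓ edge-disjoint maps. -/
open scoped Classical

noncomputable section

/- We model a finite multigraph as a vertex type `V`, an edge (index) type `E`,
and an endpoint map `ends : E → Sym2 V`; loops are edges whose endpoints form a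
diagonal unordered pair.  A (sub)graph is given by a `Finset` of edge indices. -/

variable {V E : Type*}

set_option linter.unusedSectionVars false
set_option linter.unusedVariables false

namespace TreeMap

open SimpleGraph Finset

structure Mat (E : Type*) where
  Ind : Finset E → Prop
  empty : Ind ∅
  subset : ∀ {I J : Finset E}, Ind J → I ⊆ J → Ind I
  exch : ∀ {I J : Finset E}, Ind I → Ind J → I.card < J.card →
    ∃ e ∈ J, e ∉ I ∧ Ind (insert e I)

variable (M : Mat E)

/-- Rank: size of a largest independent subset. -/
def Mat.rk (F : Finset E) : ℕ := (F.powerset.filter M.Ind).sup Finset.card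

lemma Mat.card_le_rk {J F : Finset E} (hJ : M.Ind J) (hJF : J ⊆ F) : J.card ≤ M.rk F := by
  apply Finset.le_sup
  simp [Finset.mem_filter, Finset.mem_powerset, hJ, hJF]

lemma Mat.exists_basis (F : Finset E) : ∃ B ⊆ F, M.Ind B ∧ B.card = M.rk F := by
  obtain ⟨B, hB, hBe⟩ := Finset.exists_mem_eq_sup (F.powerset.filter M.Ind)
    ⟨∅, by simp [M.empty]⟩ Finset.card
  simp only [Finset.mem_filter, Finset.mem_powerset] at hB
  exact ⟨B, hB.1, hB.2, hBe.symm⟩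

lemma Mat.rk_mono {F F' : Finset E} (h : F ⊆ F') : M.rk F ≤ M.rk F' := by
  obtain ⟨B, hBF, hBi, hBc⟩ := M.exists_basis F
  rw [← hBc]; exact M.card_le_rk hBi (hBF.trans h)

lemma Mat.rk_le_card (F : Finset E) : M.rk F ≤ F.card := by
  obtain ⟨B, hBF, _, hBc⟩ := M.exists_basis F
  rw [← hBc]; exact Finset.card_le_card hBF

lemma Mat.rk_empty : M.rk ∅ = 0 := by
  have := M.rk_le_card ∅; simpa using this

lemma Mat.basis_extend {X F : Finset E} (hX : M.Ind X) (hXF : X ⊆ F) :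
    ∃ Y, X ⊆ Y ∧ Y ⊆ F ∧ M.Ind Y ∧ Y.card = M.rk F := by
  by_cases h : X.card = M.rk F
  · exact ⟨X, subset_rfl, hXF, hX, h⟩
  · have hlt : X.card < M.rk F := lt_of_le_of_ne (M.card_le_rk hX hXF) h
    obtain ⟨B, hBF, hBi, hBc⟩ := M.exists_basis F
    obtain ⟨e, heB, heX, hei⟩ := M.exch hX hBi (by omega)
    have : M.rk F - (insert e X).card < M.rk F - X.card := by
      rw [Finset.card_insert_of_notMem heX]
      omega
    obtain ⟨Y, h1, h2, h3, h4⟩ := Mat.basis_extend hei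
      (Finset.insert_subset (hBF heB) hXF)
    exact ⟨Y, (Finset.subset_insert e X).trans h1, h2, h3, h4⟩
termination_by M.rk F - X.card

lemma Mat.rk_submod (A B : Finset E) :
    M.rk (A ∪ B) + M.rk (A ∩ B) ≤ M.rk A + M.rk B := by
  obtain ⟨X, hXs, hXi, hXc⟩ := M.exists_basis (A ∩ B)
  obtain ⟨Y, hXY, hYs, hYi, hYc⟩ := M.basis_extend hXi
    (hXs.trans Finset.inter_subset_union)
  have h1 : (Y ∩ A).card ≤ M.rk A := M.card_le_rk (M.subset hYi Finset.inter_subset_left)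
    Finset.inter_subset_right
  have h2 : (Y ∩ B).card ≤ M.rk B := M.card_le_rk (M.subset hYi Finset.inter_subset_left)
    Finset.inter_subset_right
  have h3 : (Y ∩ A) ∪ (Y ∩ B) = Y := by
    rw [← Finset.inter_union_distrib_left]
    exact Finset.inter_eq_left.mpr hYs
  have h4 : X ⊆ (Y ∩ A) ∩ (Y ∩ B) := by
    intro x hx
    have := hXY hx
    have hA := hXs hx
    simp only [Finset.mem_inter] at hA ⊢
    exact ⟨⟨this, hA.1⟩, this, hA.2⟩
  have h5 : (Y ∩ A).card + (Y ∩ B).card = Y.card + ((Y ∩ A) ∩ (Y ∩ B)).card := by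
    rw [← Finset.card_union_add_card_inter, h3]
  have h6 : X.card ≤ ((Y ∩ A) ∩ (Y ∩ B)).card := Finset.card_le_card h4
  omega

lemma Mat.rk_insert_le (e : E) (F : Finset E) : M.rk (insert e F) ≤ M.rk F + 1 := by
  obtain ⟨B, hBF, hBi, hBc⟩ := M.exists_basis (insert e F)
  have : B.erase e ⊆ F := by
    intro x hx
    have hxB := Finset.mem_of_mem_erase hx
    have := hBF hxB
    rcases Finset.mem_insert.mp this with h | h
    · exact absurd h (Finset.ne_of_mem_erase hx)
    · exact h
  have h1 : (B.erase e).card ≤ M.rk F := M.card_le_rk (M.subset hBi (Finset.erase_subset e B)) this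
  have h2 : B.card ≤ (B.erase e).card + 1 := by
    by_cases h : e ∈ B
    · rw [Finset.card_erase_of_mem h]
      have : 1 ≤ B.card := Finset.card_pos.mpr ⟨e, h⟩
      omega
    · rw [Finset.erase_eq_of_notMem h]
      omega
  omega

/-- e in the closure of A, A ⊆ B, e ∉ B implies e in closure of B. -/
lemma Mat.closure_mono {e : E} {A B : Finset E} (hAB : A ⊆ B) (heB : e ∉ B)
    (h : M.rk (insert e A) = M.rk A) : M.rk (insert e B) = M.rk B := by
  have hsub := M.rk_submod B (insert e A)
  have h1 : B ∪ insert e A = insert e B := by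
    ext x; simp only [Finset.mem_union, Finset.mem_insert]
    constructor
    · rintro (h | h | h) <;> tauto
    · rintro (h | h)
      · tauto
      · exact Or.inl h
  have h2 : B ∩ insert e A = A := by
    ext x; simp only [Finset.mem_inter, Finset.mem_insert]
    constructor
    · rintro ⟨hxB, hx | hx⟩
      · exact absurd (hx ▸ hxB) heB
      · exact hx
    · intro hx; exact ⟨hAB hx, Or.inr hx⟩
  rw [h1, h2, h] at hsub
  have := M.rk_mono (Finset.subset_insert e B)
  omega

/-- Contraction by a non-loop element. -/
def Mat.con (e : E) (he : M.Ind {e}) : Mat E where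
  Ind I := e ∉ I ∧ M.Ind (insert e I)
  empty := ⟨Finset.notMem_empty e, by simpa using he⟩
  subset := by
    rintro I J ⟨heJ, hJ⟩ hIJ
    exact ⟨fun h => heJ (hIJ h), M.subset hJ (Finset.insert_subset_insert e hIJ)⟩
  exch := by
    rintro I J ⟨heI, hI⟩ ⟨heJ, hJ⟩ hc
    have hc' : (insert e I).card < (insert e J).card := by
      rw [Finset.card_insert_of_notMem heI, Finset.card_insert_of_notMem heJ]
      omega
    obtain ⟨x, hxJ, hxI, hxi⟩ := M.exch hI hJ hc'
    have hxJ' : x ∈ J := by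
      rcases Finset.mem_insert.mp hxJ with h | h
      · exact absurd (h ▸ Finset.mem_insert_self e I) hxI
      · exact h
    have hxe : x ≠ e := fun h => hxI (h ▸ Finset.mem_insert_self e I)
    have hxI' : x ∉ I := fun h => hxI (Finset.mem_insert_of_mem h)
    refine ⟨x, hxJ', hxI', ?_, ?_⟩
    · simp only [Finset.mem_insert]
      rintro (h | h)
      · exact hxe h.symm
      · exact heI h
    · have : insert e (insert x I) = insert x (insert e I) := Finset.insert_comm e x I
      rw [this]
      exact hxi

lemma Mat.rk_con {e : E} (he : M.Ind {e}) {F : Finset E} (heF : e ∉ F) :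
    (M.con e he).rk F + 1 = M.rk (insert e F) := by
  have hle : (M.con e he).rk F + 1 ≤ M.rk (insert e F) := by
    obtain ⟨B, hBF, hBi, hBc⟩ := (M.con e he).exists_basis F
    obtain ⟨heB, hBi'⟩ := hBi
    have : (insert e B).card = B.card + 1 := Finset.card_insert_of_notMem heB
    rw [← hBc, ← this]
    exact M.card_le_rk hBi' (Finset.insert_subset_insert e hBF)
  have hge : M.rk (insert e F) ≤ (M.con e he).rk F + 1 := by
    have heF' : ({e} : Finset E) ⊆ insert e F := by simp
    obtain ⟨Y, h1, h2, h3, h4⟩ := M.basis_extend he heF'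
    have heY : e ∈ Y := h1 (Finset.mem_singleton_self e)
    have hYe : Y.erase e ⊆ F := by
      intro x hx
      rcases Finset.mem_insert.mp (h2 (Finset.mem_of_mem_erase hx)) with h | h
      · exact absurd h (Finset.ne_of_mem_erase hx)
      · exact h
    have hind : (M.con e he).Ind (Y.erase e) := by
      refine ⟨Finset.notMem_erase e Y, ?_⟩
      rw [Finset.insert_erase heY]
      exact h3
    have := (M.con e he).card_le_rk hind hYe
    have hc : (Y.erase e).card + 1 = Y.card := by
      rw [Finset.card_erase_of_mem heY]
      have : 1 ≤ Y.card := Finset.card_pos.mpr ⟨e, heY⟩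
      omega
    omega
  omega

/-- The matroid union / partition theorem (Nash-Williams / Edmonds),
    deficiency form. -/
theorem union_theorem {k : ℕ} (hk : 0 < k) (ground : Finset E) (Ms : Fin k → Mat E)
    (cond : ∀ F ⊆ ground, F.card ≤ ∑ i, (Ms i).rk F) :
    ∃ col : E → Fin k, ∀ i, (Ms i).Ind (ground.filter fun e => col e = i) := by
  induction ground using Finset.strongInduction generalizing Ms with
  | _ ground IH =>
  rcases ground.eq_empty_or_nonempty with rfl | ⟨e, he⟩
  · exact ⟨fun _ => ⟨0, hk⟩, fun i => by simpa using (Ms i).empty⟩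
  · -- find a good index i₀
    have key : ∃ i₀ : Fin k, ∃ h : (Ms i₀).Ind {e},
        ∀ F ⊆ ground.erase e,
          F.card ≤ ∑ i, (Function.update Ms i₀ ((Ms i₀).con e h) i).rk F := by
      by_contra hcon
      push_neg at hcon
      -- for every i there is a tight set whose closure contains e
      have cert : ∀ i : Fin k, ∃ F, F ⊆ ground.erase e ∧
          F.card = ∑ j, (Ms j).rk F ∧ (Ms i).rk (insert e F) = (Ms i).rk F := by
        intro i
        by_cases hind : (Ms i).Ind {e}
        · obtain ⟨F, hF, hviol⟩ := hcon i hind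
          have heF : e ∉ F := fun h => (Finset.notMem_erase e ground) (hF h)
          have hsum1 : ∑ j, (Function.update Ms i ((Ms i).con e hind) j).rk F
              = ((Ms i).con e hind).rk F + ∑ j ∈ Finset.univ.erase i, (Ms j).rk F := by
            rw [← Finset.add_sum_erase _ _ (Finset.mem_univ i)]
            congr 1
            · rw [Function.update_self]
            · apply Finset.sum_congr rfl
              intro j hj
              rw [Function.update_of_ne (Finset.ne_of_mem_erase hj)]
          have hsum2 : ∑ j, (Ms j).rk F
              = (Ms i).rk F + ∑ j ∈ Finset.univ.erase i, (Ms j).rk F := by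
            rw [← Finset.add_sum_erase _ _ (Finset.mem_univ i)]
          have hrkcon : ((Ms i).con e hind).rk F + 1 = (Ms i).rk (insert e F) :=
            (Ms i).rk_con hind heF
          have hmono : (Ms i).rk F ≤ (Ms i).rk (insert e F) :=
            (Ms i).rk_mono (Finset.subset_insert e F)
          have hcond : F.card ≤ ∑ j, (Ms j).rk F :=
            cond F (hF.trans (Finset.erase_subset e ground))
          rw [hsum1] at hviol
          rw [hsum2] at hcond
          refine ⟨F, hF, ?_, ?_⟩ <;> omega
        · refine ⟨∅, Finset.empty_subset _, by simp [Mat.rk_empty], ?_⟩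
          have h1 : (Ms i).rk {e} = 0 := by
            obtain ⟨B, hBF, hBi, hBc⟩ := (Ms i).exists_basis {e}
            rcases Finset.subset_singleton_iff.mp hBF with rfl | rfl
            · simpa using hBc.symm
            · exact absurd hBi hind
          simpa [Mat.rk_empty] using h1
      choose T hT1 hT2 hT3 using cert
      set U : Finset E := Finset.univ.biUnion T with hU
      have hUsub : U ⊆ ground.erase e := by
        intro x hx
        rcases Finset.mem_biUnion.mp hx with ⟨i, _, hxi⟩
        exact hT1 i hxi
      have heU : e ∉ U := fun h => (Finset.notMem_erase e ground) (hUsub h)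
      -- tight sets are closed under union
      have tight_union : ∀ A B : Finset E, A ⊆ ground.erase e →
          B ⊆ ground.erase e → A.card = ∑ j, (Ms j).rk A →
          B.card = ∑ j, (Ms j).rk B → (A ∪ B).card = ∑ j, (Ms j).rk (A ∪ B) := by
        intro A B hA hB hAt hBt
        have hsm : ∑ j, (Ms j).rk (A ∪ B) + ∑ j, (Ms j).rk (A ∩ B)
            ≤ ∑ j, (Ms j).rk A + ∑ j, (Ms j).rk B := by
          rw [← Finset.sum_add_distrib, ← Finset.sum_add_distrib]
          exact Finset.sum_le_sum fun j _ => (Ms j).rk_submod A B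
        have h1 : (A ∩ B).card ≤ ∑ j, (Ms j).rk (A ∩ B) :=
          cond _ ((Finset.inter_subset_left).trans (hA.trans (Finset.erase_subset e ground)))
        have h2 : (A ∪ B).card ≤ ∑ j, (Ms j).rk (A ∪ B) :=
          cond _ ((Finset.union_subset hA hB).trans (Finset.erase_subset e ground))
        have h3 := Finset.card_union_add_card_inter A B
        omega
      have hUtight : U.card = ∑ j, (Ms j).rk U := by
        have : ∀ s : Finset (Fin k), (s.biUnion T) ⊆ ground.erase e ∧
            (s.biUnion T).card = ∑ j, (Ms j).rk (s.biUnion T) := by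
          intro s
          induction s using Finset.induction with
          | empty => simp [Mat.rk_empty]
          | @insert a s' hx ih =>
            rw [Finset.biUnion_insert]
            refine ⟨Finset.union_subset (hT1 a) ih.1, ?_⟩
            exact tight_union _ _ (hT1 a) ih.1 (hT2 a) ih.2
        exact (this Finset.univ).2
      have hcl : ∀ i, (Ms i).rk (insert e U) = (Ms i).rk U := by
        intro i
        exact (Ms i).closure_mono (Finset.subset_biUnion_of_mem T (Finset.mem_univ i)) heU (hT3 i)
      have hfinal : (insert e U).card ≤ ∑ j, (Ms j).rk (insert e U) := by
        apply cond
        apply Finset.insert_subset he (hUsub.trans (Finset.erase_subset e ground))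
      rw [Finset.card_insert_of_notMem heU] at hfinal
      have : ∑ j, (Ms j).rk (insert e U) = ∑ j, (Ms j).rk U :=
        Finset.sum_congr rfl fun j _ => hcl j
      omega
    obtain ⟨i₀, hind, cond'⟩ := key
    obtain ⟨col', hcol'⟩ := IH (ground.erase e) (Finset.erase_ssubset he) _ cond'
    refine ⟨Function.update col' e i₀, fun i => ?_⟩
    by_cases hi : i = i₀
    · subst hi
      have heq : ground.filter (fun x => Function.update col' e i x = i)
          = insert e ((ground.erase e).filter fun x => col' x = i) := by
        ext x
        simp only [Finset.mem_filter, Finset.mem_insert, Finset.mem_erase]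
        by_cases hx : x = e
        · subst hx
          simp [Function.update_self, he]
        · rw [Function.update_of_ne hx]
          tauto
      rw [heq]
      have := hcol' i
      rw [Function.update_self] at this
      exact this.2
    · have heq : ground.filter (fun x => Function.update col' e i₀ x = i)
          = (ground.erase e).filter fun x => col' x = i := by
        ext x
        simp only [Finset.mem_filter, Finset.mem_erase]
        by_cases hx : x = e
        · subst hx
          simp [Function.update_self]
          intro h
          exact fun hc => hi (hc ▸ rfl)
        · rw [Function.update_of_ne hx]
          tauto
      rw [heq]
      have := hcol' i
      rw [Function.update_of_ne hi] at this
      exact this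


variable (ends : E → Sym2 V)

/-- `(1,m)`-sparsity. -/
def Sp (m : ℕ) (F : Finset E) : Prop :=
  ∀ S : Finset V, S.Nonempty → (spanned ends F S).card + m ≤ S.card

/-- A representative endpoint of an edge. -/
def rep (e : E) : V := (ends e).out.1

lemma rep_mem (e : E) : rep ends e ∈ ends e := Sym2.out_fst_mem _

lemma sym2_cases (z : Sym2 V) : ∃ a b, z = s(a, b) := by
  refine Sym2.ind (f := fun z => ∃ a b, z = s(a, b)) ?_ z
  exact fun a b => ⟨a, b, rfl⟩

lemma ends_cases (e : E) : ∃ a b, ends e = s(a, b) := sym2_cases (ends e)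

variable {ends}

lemma mem_spanned {e : E} {F : Finset E} {S : Finset V} :
    e ∈ spanned ends F S ↔ e ∈ F ∧ ∀ v ∈ ends e, v ∈ S := Finset.mem_filter

lemma spanned_subset (F : Finset E) (S : Finset V) : spanned ends F S ⊆ F :=
  Finset.filter_subset _ _

lemma spanned_mono {F F' : Finset E} (h : F ⊆ F') (S : Finset V) :
    spanned ends F S ⊆ spanned ends F' S := by
  intro e he
  rw [mem_spanned] at he ⊢
  exact ⟨h he.1, he.2⟩

lemma spanned_empty (F : Finset E) : spanned ends F (∅ : Finset V) = ∅ := by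
  ext e
  simp only [mem_spanned, Finset.notMem_empty, iff_false, not_and]
  intro _ h
  exact h _ (rep_mem ends e)

lemma spanned_univ [Fintype V] (F : Finset E) : spanned ends F Finset.univ = F := by
  ext e; simp [mem_spanned]

lemma Sp.subset {m : ℕ} {F F' : Finset E} (h : Sp ends m F') (hFF : F ⊆ F') :
    Sp ends m F := fun S hS =>
  le_trans (by gcongr; exact spanned_mono hFF S) (h S hS)

lemma Sp.empty {m : ℕ} (hm : m ≤ 1) : Sp ends m (∅ : Finset E) := by
  intro S hS
  have : spanned ends (∅ : Finset E) S = ∅ := by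
    ext e; simp [mem_spanned]
  rw [this]
  have := Finset.card_pos.mpr hS
  simpa using by omega

lemma adj_of_edge {F : Finset E} {e : E} {u w : V} (he : e ∈ F)
    (hew : ends e = s(u, w)) (hne : u ≠ w) : (underGraph ends F).Adj u w := by
  rw [underGraph, SimpleGraph.fromRel_adj]
  exact ⟨hne, Or.inl ⟨e, he, hew⟩⟩

lemma adj_elim {F : Finset E} {u w : V} (h : (underGraph ends F).Adj u w) :
    u ≠ w ∧ ∃ e ∈ F, ends e = s(u, w) := by
  rw [underGraph, SimpleGraph.fromRel_adj] at h
  refine ⟨h.1, ?_⟩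
  rcases h.2 with ⟨e, he, hew⟩ | ⟨e, he, hew⟩
  · exact ⟨e, he, hew⟩
  · exact ⟨e, he, hew.trans (Sym2.eq_swap)⟩

lemma reach_of_mem {F : Finset E} {e : E} {u w : V} (he : e ∈ F)
    (hu : u ∈ ends e) (hw : w ∈ ends e) : (underGraph ends F).Reachable u w := by
  by_cases huw : u = w
  · exact huw ▸ SimpleGraph.Reachable.refl u
  · obtain ⟨a, b, hab⟩ := ends_cases ends e
    rw [hab, Sym2.mem_iff] at hu hw
    have : ends e = s(u, w) := by
      rcases hu with rfl | rfl <;> rcases hw with rfl | rfl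
      · exact absurd rfl huw
      · exact hab
      · exact hab.trans Sym2.eq_swap
      · exact absurd rfl huw
    exact (adj_of_edge he this huw).reachable

lemma uG_mono {F F' : Finset E} (h : F ⊆ F') : underGraph ends F ≤ underGraph ends F' := by
  intro u w hadj
  obtain ⟨hne, e, he, hew⟩ := adj_elim hadj
  exact adj_of_edge (h he) hew hne

/-- Walks stay inside adjacency-closed vertex sets, using only spanned edges. -/
lemma reach_spanned {F : Finset E} {S : Finset V}
    (hcl : ∀ x y, x ∈ S → (underGraph ends F).Adj x y → y ∈ S) :
    ∀ u v, u ∈ S → (underGraph ends F).Reachable u v →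
      (underGraph ends (spanned ends F S)).Reachable u v := by
  suffices H : ∀ u v (p : (underGraph ends F).Walk u v), u ∈ S →
      (underGraph ends (spanned ends F S)).Reachable u v by
    intro u v hu h
    obtain ⟨p⟩ := h
    exact H u v p hu
  intro u v p
  induction p with
  | nil => exact fun _ => SimpleGraph.Reachable.refl _
  | @cons x y z h p ih =>
    intro hx
    have hy : y ∈ S := hcl x y hx h
    obtain ⟨hne, e, he, hew⟩ := adj_elim h
    have hes : e ∈ spanned ends F S := by
      rw [mem_spanned]
      refine ⟨he, fun v hv => ?_⟩
      rw [hew, Sym2.mem_iff] at hv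
      rcases hv with rfl | rfl
      · exact hx
      · exact hy
    exact (adj_of_edge hes hew hne).reachable.trans (ih hy)

/-- From every vertex one can reach `S` avoiding edges spanned by `S`. -/
lemma reach_off {P : Finset E} {S : Finset V} (hS : S.Nonempty)
    (hconn : (underGraph ends P).Preconnected) (v : V) :
    ∃ s ∈ S, (underGraph ends (P \ spanned ends P S)).Reachable v s := by
  obtain ⟨s₀, hs₀⟩ := hS
  have H : ∀ (x y : V) (p : (underGraph ends P).Walk x y), y ∈ S →
      ∃ s ∈ S, (underGraph ends (P \ spanned ends P S)).Reachable x s := by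
    intro x y p
    induction p with
    | nil => exact fun h => ⟨_, h, SimpleGraph.Reachable.refl _⟩
    | @cons a b c h p ih =>
      intro hc
      by_cases ha : a ∈ S
      · exact ⟨a, ha, SimpleGraph.Reachable.refl _⟩
      · obtain ⟨hne, e, he, hew⟩ := adj_elim h
        have hes : e ∈ P \ spanned ends P S := by
          rw [Finset.mem_sdiff, mem_spanned]
          refine ⟨he, fun hcon => ha (hcon.2 a ?_)⟩
          rw [hew, Sym2.mem_iff]; left; rfl
        obtain ⟨s, hs, hr⟩ := ih hc
        exact ⟨s, hs, (adj_of_edge hes hew hne).reachable.trans hr⟩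
  obtain ⟨p⟩ := hconn v s₀
  exact H v s₀ p hs₀

lemma comp_rep {F : Finset E} (c : (underGraph ends F).ConnectedComponent) :
    ∃ v : V, (underGraph ends F).connectedComponentMk v = c := by
  refine SimpleGraph.ConnectedComponent.ind (fun v => ⟨v, rfl⟩) c

/-- Counting: `|V| ≤ |F| + #components`. -/
lemma comps_card [Fintype V] (F : Finset E) :
    Fintype.card V ≤ F.card + Fintype.card (underGraph ends F).ConnectedComponent := by
  induction F using Finset.induction with
  | empty =>
    have hinj : Function.Injective ((underGraph ends (∅ : Finset E)).connectedComponentMk) := by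
      intro u v h
      have := SimpleGraph.ConnectedComponent.exact h
      obtain ⟨p⟩ := this
      cases p with
      | nil => rfl
      | cons h p =>
        obtain ⟨_, e, he, _⟩ := adj_elim h
        exact absurd he (Finset.notMem_empty e)
    simpa using Fintype.card_le_of_injective _ hinj
  | @insert a F ha ih =>
    obtain ⟨p, q, hpq⟩ := ends_cases ends a
    set G := underGraph ends F with hG
    set G' := underGraph ends (insert a F) with hG'
    have hle : G ≤ G' := uG_mono (Finset.subset_insert a F)
    have key : ∀ x y : V, G'.Reachable x y → G.Reachable x y ∨
        (G.Reachable x p ∧ G.Reachable q y) ∨ (G.Reachable x q ∧ G.Reachable p y) := by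
      have H : ∀ (x y : V) (w : G'.Walk x y), G.Reachable x y ∨
          (G.Reachable x p ∧ G.Reachable q y) ∨ (G.Reachable x q ∧ G.Reachable p y) := by
        intro x y w
        induction w with
        | nil => exact Or.inl (SimpleGraph.Reachable.refl _)
        | @cons x z y h w ih =>
          obtain ⟨hne, e, heF, hee⟩ := adj_elim h
          rcases Finset.mem_insert.mp heF with rfl | heF'
          · rcases Sym2.eq_iff.mp (hpq.symm.trans hee) with ⟨rfl, rfl⟩ | ⟨rfl, rfl⟩
            · rcases ih with h1 | ⟨h1, h2⟩ | ⟨h1, h2⟩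
              · exact Or.inr (Or.inl ⟨SimpleGraph.Reachable.refl _, h1⟩)
              · exact Or.inr (Or.inl ⟨SimpleGraph.Reachable.refl _, h2⟩)
              · exact Or.inl h2
            · rcases ih with h1 | ⟨h1, h2⟩ | ⟨h1, h2⟩
              · exact Or.inr (Or.inr ⟨SimpleGraph.Reachable.refl _, h1⟩)
              · exact Or.inl h2
              · exact Or.inr (Or.inr ⟨SimpleGraph.Reachable.refl _, h2⟩)
          · have hadj : G.Adj x z := adj_of_edge heF' hee hne
            rcases ih with h1 | ⟨h1, h2⟩ | ⟨h1, h2⟩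
            · exact Or.inl (hadj.reachable.trans h1)
            · exact Or.inr (Or.inl ⟨hadj.reachable.trans h1, h2⟩)
            · exact Or.inr (Or.inr ⟨hadj.reachable.trans h1, h2⟩)
      intro x y hr
      obtain ⟨w⟩ := hr
      exact H x y w
    set g : G.ConnectedComponent → G'.ConnectedComponent :=
      SimpleGraph.ConnectedComponent.map (SimpleGraph.Hom.ofLE hle) with hg
    have hcomps : Fintype.card G.ConnectedComponent ≤
        Fintype.card G'.ConnectedComponent + 1 := by
      have hinj : Set.InjOn g (↑(Finset.univ.erase (G.connectedComponentMk q))) := by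
        intro c₁ hc₁ c₂ hc₂ hgc
        obtain ⟨u, rfl⟩ := comp_rep c₁
        obtain ⟨v, rfl⟩ := comp_rep c₂
        simp only [Finset.coe_erase, Set.mem_diff, Finset.mem_coe, Finset.mem_univ,
          Set.mem_singleton_iff] at hc₁ hc₂
        have hgc' : G'.connectedComponentMk u = G'.connectedComponentMk v := by
          have e1 : g (G.connectedComponentMk u) = G'.connectedComponentMk u := by
            simp [hg, SimpleGraph.ConnectedComponent.map_mk]
          have e2 : g (G.connectedComponentMk v) = G'.connectedComponentMk v := by
            simp [hg, SimpleGraph.ConnectedComponent.map_mk]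
          rw [← e1, ← e2, hgc]
        have hreach' : G'.Reachable u v := SimpleGraph.ConnectedComponent.exact hgc'
        rcases key u v hreach' with h1 | ⟨h1, h2⟩ | ⟨h1, h2⟩
        · exact SimpleGraph.ConnectedComponent.sound h1
        · exact absurd (SimpleGraph.ConnectedComponent.sound h2.symm) hc₂.2
        · exact absurd (SimpleGraph.ConnectedComponent.sound h1) hc₁.2
      have := Finset.card_le_card_of_injOn g (fun c _ => Finset.mem_univ (g c)) hinj
      rw [Finset.card_erase_of_mem (Finset.mem_univ _)] at this
      rw [Finset.card_univ, Finset.card_univ] at this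
      omega
    have hcard : (insert a F).card = F.card + 1 := Finset.card_insert_of_notMem ha
    omega

section Counting

variable [Fintype V]

/-- A `(1,1)`-tight edge set on vertex set `S₀` is connected on `S₀`. -/
lemma conn_of_tight {F : Finset E} {S₀ : Finset V} (hsp : Sp ends 1 F)
    (hspan : ∀ e ∈ F, ∀ u ∈ ends e, u ∈ S₀) (hS₀ : S₀.Nonempty)
    (hcard : S₀.card ≤ F.card + 1) :
    ∀ u ∈ S₀, ∀ v ∈ S₀, (underGraph ends F).Reachable u v := by
  set G := underGraph ends F with hG
  set T : Finset G.ConnectedComponent := S₀.image (fun v => G.connectedComponentMk v) with hT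
  have h1 : F.card = ∑ c ∈ T, (F.filter fun e => G.connectedComponentMk (rep ends e) = c).card := by
    apply Finset.card_eq_sum_card_fiberwise
    intro e he
    exact Finset.mem_image.mpr ⟨rep ends e, hspan e he _ (rep_mem ends e), rfl⟩
  have h2 : ∀ c ∈ T, (F.filter fun e => G.connectedComponentMk (rep ends e) = c)
      ⊆ spanned ends F (S₀.filter fun v => G.connectedComponentMk v = c) := by
    intro c _ e he
    rw [Finset.mem_filter] at he
    rw [mem_spanned]
    refine ⟨he.1, fun u hu => ?_⟩
    rw [Finset.mem_filter]
    refine ⟨hspan e he.1 u hu, ?_⟩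
    rw [← he.2]
    exact SimpleGraph.ConnectedComponent.sound (reach_of_mem he.1 hu (rep_mem ends e))
  have h3 : ∀ c ∈ T, (S₀.filter fun v => G.connectedComponentMk v = c).Nonempty := by
    intro c hc
    obtain ⟨v, hv, rfl⟩ := Finset.mem_image.mp hc
    exact ⟨v, Finset.mem_filter.mpr ⟨hv, rfl⟩⟩
  have h4 : S₀.card = ∑ c ∈ T, (S₀.filter fun v => G.connectedComponentMk v = c).card := by
    apply Finset.card_eq_sum_card_fiberwise
    intro v hv
    exact Finset.mem_image.mpr ⟨v, hv, rfl⟩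
  have h5 : F.card + T.card ≤ S₀.card := by
    rw [h1, h4]
    rw [show T.card = ∑ _c ∈ T, 1 from Finset.card_eq_sum_ones T]
    rw [← Finset.sum_add_distrib]
    apply Finset.sum_le_sum
    intro c hc
    have hc1 := Finset.card_le_card (h2 c hc)
    have hc2 := hsp _ (h3 c hc)
    omega
  have hT1 : T.card ≤ 1 := by omega
  intro u hu v hv
  apply SimpleGraph.ConnectedComponent.exact
  exact Finset.card_le_one.mp hT1 _ (Finset.mem_image.mpr ⟨u, hu, rfl⟩) _
    (Finset.mem_image.mpr ⟨v, hv, rfl⟩)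

/-- A connected spanning edge set with `n-1` edges is `(1,1)`-sparse. -/
lemma sparse_of_tree {P : Finset E} (hc : (underGraph ends P).Connected)
    (hcard : P.card + 1 = Fintype.card V) : Sp ends 1 P := by
  intro S hS
  set Q := spanned ends P S with hQ
  have hQP : Q ⊆ P := spanned_subset P S
  set P' := P \ Q with hP'
  have hcomp1 : Fintype.card (underGraph ends P').ConnectedComponent ≤ S.card := by
    have hsurj : Function.Surjective
        (fun s : {x // x ∈ S} => (underGraph ends P').connectedComponentMk s.1) := by
      intro c
      obtain ⟨v, rfl⟩ := comp_rep c
      obtain ⟨s, hs, hr⟩ := reach_off hS hc.preconnected v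
      exact ⟨⟨s, hs⟩, SimpleGraph.ConnectedComponent.sound hr.symm⟩
    have := Fintype.card_le_of_surjective _ hsurj
    simpa [Fintype.card_coe] using this
  have hcomp2 := comps_card (ends := ends) P'
  have h1 : P'.card = P.card - Q.card := Finset.card_sdiff_of_subset hQP
  have h2 : Q.card ≤ P.card := Finset.card_le_card hQP
  omega

/-- A map is `(1,0)`-sparse with exactly `n` edges. -/
lemma sparse_of_map {P : Finset E} (h : IsMapOn ends P) :
    Sp ends 0 P ∧ P.card = Fintype.card V := by
  obtain ⟨tail, ht1, ht2⟩ := h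
  have hcard : P.card = Fintype.card V := by
    rw [Finset.card_eq_sum_card_fiberwise (f := tail) (t := Finset.univ)
      (fun x _ => Finset.mem_univ _)]
    simp [ht2, Finset.card_univ]
  refine ⟨?_, hcard⟩
  intro S _
  have hsub : spanned ends P S ⊆ S.biUnion (fun v => P.filter fun e => tail e = v) := by
    intro e he
    rw [mem_spanned] at he
    exact Finset.mem_biUnion.mpr ⟨tail e, he.2 _ (ht1 e he.1),
      Finset.mem_filter.mpr ⟨he.1, rfl⟩⟩
  calc (spanned ends P S).card + 0 = (spanned ends P S).card := by omega
    _ ≤ (S.biUnion (fun v => P.filter fun e => tail e = v)).card := Finset.card_le_card hsub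
    _ ≤ ∑ v ∈ S, (P.filter fun e => tail e = v).card := Finset.card_biUnion_le
    _ = ∑ v ∈ S, 1 := Finset.sum_congr rfl fun v _ => ht2 v
    _ = S.card := by simp

/-- Hall's theorem: a `(1,0)`-sparse set with `n` edges is a map. -/
lemma map_of_sparse [Nonempty V] {P : Finset E} (hsp : Sp ends 0 P)
    (hcard : P.card = Fintype.card V) : IsMapOn ends P := by
  set t : {e // e ∈ P} → Finset V := fun e => Finset.univ.filter (fun v => v ∈ ends e.1) with ht
  have hall : ∀ s : Finset {e // e ∈ P}, s.card ≤ (s.biUnion t).card := by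
    intro s
    rcases s.eq_empty_or_nonempty with rfl | hs
    · simp
    · set S := s.biUnion t with hS
      have hSne : S.Nonempty := by
        obtain ⟨e, he⟩ := hs
        exact ⟨rep ends e.1, Finset.mem_biUnion.mpr ⟨e, he,
          Finset.mem_filter.mpr ⟨Finset.mem_univ _, rep_mem ends e.1⟩⟩⟩
      have hinj : s.card ≤ (spanned ends P S).card := by
        apply Finset.card_le_card_of_injOn (fun e => e.1)
        · intro e he
          rw [Finset.mem_coe, mem_spanned]
          refine ⟨e.2, fun u hu => ?_⟩
          exact Finset.mem_biUnion.mpr ⟨e, he, Finset.mem_filter.mpr ⟨Finset.mem_univ _, hu⟩⟩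
        · intro e₁ _ e₂ _ h
          exact Subtype.ext h
      have := hsp S hSne
      omega
  obtain ⟨f, hfinj, hfm⟩ := (Finset.all_card_le_biUnion_card_iff_exists_injective t).mp hall
  set tail : E → V := fun e => if h : e ∈ P then f ⟨e, h⟩ else Classical.arbitrary V with htl
  have htail : ∀ e (h : e ∈ P), tail e = f ⟨e, h⟩ := by
    intro e h; simp [htl, h]
  refine ⟨tail, ?_, ?_⟩
  · intro e he
    rw [htail e he]
    have := hfm ⟨e, he⟩
    rw [ht] at this
    simpa using this
  · have hle : ∀ v, (P.filter fun e => tail e = v).card ≤ 1 := by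
      intro v
      rw [Finset.card_le_one]
      intro e₁ h₁ e₂ h₂
      rw [Finset.mem_filter] at h₁ h₂
      have h1 := (htail e₁ h₁.1) ▸ h₁.2
      have h2 := (htail e₂ h₂.1) ▸ h₂.2
      have : f ⟨e₁, h₁.1⟩ = f ⟨e₂, h₂.1⟩ := by rw [h1, h2]
      exact congrArg Subtype.val (hfinj this)
    have hsum : ∑ v : V, (P.filter fun e => tail e = v).card = P.card :=
      (Finset.card_eq_sum_card_fiberwise (fun x _ => Finset.mem_univ (tail x))).symm
    intro v
    by_contra hne
    have hv0 : (P.filter fun e => tail e = v).card < 1 := by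
      have := hle v; omega
    have hlt : ∑ u : V, (P.filter fun e => tail e = u).card < ∑ _u : V, 1 :=
      Finset.sum_lt_sum (fun i _ => hle i) ⟨v, Finset.mem_univ v, hv0⟩
    simp only [Finset.sum_const, smul_eq_mul, mul_one, Finset.card_univ] at hlt
    rw [hsum, hcard] at hlt
    omega

/-- Blocking set extraction: if `I` is sparse but `insert e I` is not. -/
lemma blocking {m : ℕ} {I : Finset E} {e : E} (hI : Sp ends m I)
    (hbl : ¬ Sp ends m (insert e I)) :
    ∃ S : Finset V, S.Nonempty ∧ (∀ u ∈ ends e, u ∈ S) ∧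
      (spanned ends I S).card + m = S.card := by
  rw [Sp] at hbl
  push_neg at hbl
  obtain ⟨S, hSne, hSc⟩ := hbl
  have hsub : spanned ends (insert e I) S ⊆ insert e (spanned ends I S) := by
    intro x hx
    rw [mem_spanned] at hx
    rcases Finset.mem_insert.mp hx.1 with rfl | hxI
    · exact Finset.mem_insert_self _ _
    · exact Finset.mem_insert_of_mem (mem_spanned.mpr ⟨hxI, hx.2⟩)
  have hc1 : (spanned ends (insert e I) S).card ≤ (spanned ends I S).card + 1 :=
    le_trans (Finset.card_le_card hsub) (Finset.card_insert_le _ _)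
  have hc2 := hI S hSne
  have hends : ∀ u ∈ ends e, u ∈ S := by
    by_contra hcon
    push_neg at hcon
    have heq : spanned ends (insert e I) S = spanned ends I S := by
      ext x
      rw [mem_spanned, mem_spanned]
      constructor
      · rintro ⟨hx1, hx2⟩
        rcases Finset.mem_insert.mp hx1 with rfl | hxI
        · obtain ⟨u, hu, hus⟩ := hcon
          exact absurd (hx2 u hu) hus
        · exact ⟨hxI, hx2⟩
      · rintro ⟨hx1, hx2⟩
        exact ⟨Finset.mem_insert_of_mem hx1, hx2⟩
    rw [heq] at hSc
    omega
  exact ⟨S, hSne, hends, by omega⟩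

/-- If `I` is `(1,1)`-sparse and `insert e I` is not, the endpoints of `e`
are connected in `I`. -/
lemma reach_of_blocked {I : Finset E} {e : E} (hI : Sp ends 1 I)
    (hbl : ¬ Sp ends 1 (insert e I)) :
    ∀ u ∈ ends e, ∀ w ∈ ends e, (underGraph ends I).Reachable u w := by
  intro u hu w hw
  obtain ⟨S, hne, hends, htight⟩ := blocking hI hbl
  have hFsp : Sp ends 1 (spanned ends I S) := hI.subset (spanned_subset I S)
  have hspan : ∀ e' ∈ spanned ends I S, ∀ x ∈ ends e', x ∈ S :=
    fun e' he' => (mem_spanned.mp he').2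
  have hr := conn_of_tight hFsp hspan hne (by omega) u (hends u hu) w (hends w hw)
  exact hr.mono (uG_mono (spanned_subset I S))

lemma comp_class_nonempty {F : Finset E} (c : (underGraph ends F).ConnectedComponent) :
    (Finset.univ.filter fun v => (underGraph ends F).connectedComponentMk v = c).Nonempty := by
  obtain ⟨v, rfl⟩ := comp_rep c
  exact ⟨v, Finset.mem_filter.mpr ⟨Finset.mem_univ v, rfl⟩⟩

/-- Counting argument: if all edges of `J` have their endpoints `I`-connected and
`J` is `(1,1)`-sparse, then `|J| ≤ |I|`. -/
lemma card_le_of_endpoints_reach {I J : Finset E} (hJ : Sp ends 1 J)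
    (hreach : ∀ e ∈ J, ∀ u ∈ ends e, ∀ w ∈ ends e, (underGraph ends I).Reachable u w) :
    J.card ≤ I.card := by
  have h1 : J.card = ∑ c : (underGraph ends I).ConnectedComponent,
      (J.filter fun e => (underGraph ends I).connectedComponentMk (rep ends e) = c).card :=
    Finset.card_eq_sum_card_fiberwise (fun e _ => Finset.mem_univ _)
  have hV : Fintype.card V = ∑ c : (underGraph ends I).ConnectedComponent,
      (Finset.univ.filter fun v => (underGraph ends I).connectedComponentMk v = c).card := by
    rw [← Finset.card_univ]
    exact Finset.card_eq_sum_card_fiberwise (fun v _ => Finset.mem_univ _)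
  have h2 : J.card + Fintype.card (underGraph ends I).ConnectedComponent ≤ Fintype.card V := by
    rw [h1, hV, ← Finset.card_univ (α := (underGraph ends I).ConnectedComponent),
      Finset.card_eq_sum_ones (Finset.univ : Finset (underGraph ends I).ConnectedComponent),
      ← Finset.sum_add_distrib]
    apply Finset.sum_le_sum
    intro c _
    have hsub : (J.filter fun e => (underGraph ends I).connectedComponentMk (rep ends e) = c)
        ⊆ spanned ends J (Finset.univ.filter fun v => (underGraph ends I).connectedComponentMk v = c) := by
      intro e he
      rw [Finset.mem_filter] at he
      rw [mem_spanned]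
      refine ⟨he.1, fun u hu => ?_⟩
      rw [Finset.mem_filter]
      refine ⟨Finset.mem_univ u, ?_⟩
      rw [← he.2]
      exact SimpleGraph.ConnectedComponent.sound
        (hreach e he.1 u hu (rep ends e) (rep_mem ends e))
    have hs := hJ _ (comp_class_nonempty (F := I) c)
    have := Finset.card_le_card hsub
    omega
  have h3 := comps_card (ends := ends) I
  omega

/-- Exchange property for `(1,1)`-sparse sets. -/
lemma exch1 {I J : Finset E} (hI : Sp ends 1 I) (hJ : Sp ends 1 J)
    (hc : I.card < J.card) : ∃ e ∈ J, e ∉ I ∧ Sp ends 1 (insert e I) := by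
  by_contra h
  push_neg at h
  have hreach : ∀ e ∈ J, ∀ u ∈ ends e, ∀ w ∈ ends e, (underGraph ends I).Reachable u w := by
    intro e he u hu w hw
    by_cases heI : e ∈ I
    · exact reach_of_mem heI hu hw
    · exact reach_of_blocked hI (h e he heI) u hu w hw
  have := card_le_of_endpoints_reach hJ hreach
  omega

/-- Tight sets for `(1,0)`-sparsity are closed under union. -/
lemma tight_union0 {I : Finset E} (hI : Sp ends 0 I) {A B : Finset V}
    (hA : (spanned ends I A).card = A.card) (hB : (spanned ends I B).card = B.card) :
    (spanned ends I (A ∪ B)).card = (A ∪ B).card := by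
  have hsp_le : ∀ S : Finset V, (spanned ends I S).card ≤ S.card := by
    intro S
    rcases S.eq_empty_or_nonempty with rfl | hS
    · simp [spanned_empty]
    · have := hI S hS; omega
  have h1 : spanned ends I A ∪ spanned ends I B ⊆ spanned ends I (A ∪ B) := by
    intro e he
    rcases Finset.mem_union.mp he with he | he <;> rw [mem_spanned] at he ⊢ <;>
      exact ⟨he.1, fun u hu => Finset.mem_union.mpr (by first | exact Or.inl (he.2 u hu) | exact Or.inr (he.2 u hu))⟩
  have h2 : spanned ends I A ∩ spanned ends I B ⊆ spanned ends I (A ∩ B) := by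
    intro e he
    rw [Finset.mem_inter] at he
    obtain ⟨hA', hB'⟩ := he
    rw [mem_spanned] at hA' hB' ⊢
    exact ⟨hA'.1, fun u hu => Finset.mem_inter.mpr ⟨hA'.2 u hu, hB'.2 u hu⟩⟩
  have e1 := Finset.card_union_add_card_inter (spanned ends I A) (spanned ends I B)
  have e2 := Finset.card_union_add_card_inter A B
  have e3 := Finset.card_le_card h1
  have e4 := Finset.card_le_card h2
  have e5 := hsp_le (A ∪ B)
  have e6 := hsp_le (A ∩ B)
  omega

/-- Exchange property for `(1,0)`-sparse sets. -/
lemma exch0 {I J : Finset E} (hI : Sp ends 0 I) (hJ : Sp ends 0 J)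
    (hc : I.card < J.card) : ∃ e ∈ J, e ∉ I ∧ Sp ends 0 (insert e I) := by
  by_contra h
  push_neg at h
  have hJI : (J \ I).Nonempty := by
    rw [Finset.sdiff_nonempty]
    intro hs
    exact absurd (Finset.card_le_card hs) (by omega)
  have hblk : ∀ x : {e // e ∈ J \ I}, ∃ S : Finset V, S.Nonempty ∧
      (∀ u ∈ ends x.1, u ∈ S) ∧ (spanned ends I S).card = S.card := by
    rintro ⟨e, he⟩
    rw [Finset.mem_sdiff] at he
    obtain ⟨S, h1', h2', h3'⟩ := blocking hI (h e he.1 he.2)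
    exact ⟨S, h1', h2', by omega⟩
  choose Se hSe1 hSe2 hSe3 using hblk
  set U : Finset V := Finset.univ.biUnion (fun x : {e // e ∈ J \ I} => Se x) with hU
  have hUtight : (spanned ends I U).card = U.card := by
    rw [hU]
    have : ∀ s : Finset {e // e ∈ J \ I},
        (spanned ends I (s.biUnion Se)).card = (s.biUnion Se).card := by
      intro s
      induction s using Finset.induction with
      | empty => simp [spanned_empty]
      | @insert a s' ha ih =>
        rw [Finset.biUnion_insert]
        exact tight_union0 hI (hSe3 a) ih
    exact this Finset.univ
  have hUspan : ∀ e ∈ J \ I, ∀ u ∈ ends e, u ∈ U := by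
    intro e he u hu
    exact Finset.mem_biUnion.mpr ⟨⟨e, he⟩, Finset.mem_univ _, hSe2 ⟨e, he⟩ u hu⟩
  have hUne : U.Nonempty := by
    obtain ⟨e, he⟩ := hJI
    obtain ⟨v, hv⟩ := hSe1 ⟨e, he⟩
    exact ⟨v, Finset.mem_biUnion.mpr ⟨⟨e, he⟩, Finset.mem_univ _, hv⟩⟩
  -- counting
  have hsplit : (J \ spanned ends J U).card = J.card - (spanned ends J U).card :=
    Finset.card_sdiff_of_subset (spanned_subset J U)
  have hJsp : (spanned ends J U).card ≤ J.card := Finset.card_le_card (spanned_subset J U)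
  have hrest : J \ spanned ends J U ⊆ I \ spanned ends I U := by
    intro e he
    rw [Finset.mem_sdiff] at he ⊢
    obtain ⟨heJ, hnsp⟩ := he
    have hne : ¬ ∀ u ∈ ends e, u ∈ U := fun hc' => hnsp (mem_spanned.mpr ⟨heJ, hc'⟩)
    have heI : e ∈ I := by
      by_contra heI
      exact hne (hUspan e (Finset.mem_sdiff.mpr ⟨heJ, heI⟩))
    exact ⟨heI, fun hc' => hne (mem_spanned.mp hc').2⟩
  have h1 := Finset.card_le_card hrest
  have h2 : (I \ spanned ends I U).card = I.card - (spanned ends I U).card :=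
    Finset.card_sdiff_of_subset (spanned_subset I U)
  have h3 : (spanned ends I U).card ≤ I.card := Finset.card_le_card (spanned_subset I U)
  have h4 := hJ U hUne
  omega

lemma sp1_to_sp0 {F : Finset E} (h : Sp ends 1 F) : Sp ends 0 F := by
  intro S hS
  have := h S hS
  omega

lemma sp0_card_le {F : Finset E} (h : Sp ends 0 F) (S : Finset V) :
    (spanned ends F S).card ≤ S.card := by
  rcases S.eq_empty_or_nonempty with rfl | hS
  · simp [spanned_empty]
  · have := h S hS; omega

lemma sp0_insert {B : Finset E} (h : Sp ends 1 B) (e : E) : Sp ends 0 (insert e B) := by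
  intro S hS
  have hsub : spanned ends (insert e B) S ⊆ insert e (spanned ends B S) := by
    intro x hx
    rw [mem_spanned] at hx
    rcases Finset.mem_insert.mp hx.1 with rfl | hxI
    · exact Finset.mem_insert_self _ _
    · exact Finset.mem_insert_of_mem (mem_spanned.mpr ⟨hxI, hx.2⟩)
  have h1 : (spanned ends (insert e B) S).card ≤ (spanned ends B S).card + 1 :=
    le_trans (Finset.card_le_card hsub) (Finset.card_insert_le _ _)
  have h2 := h S hS
  omega

/-- Translating reachability down to a sub-edge-set whose components absorb all
edges of `F`. -/
lemma reach_trans_down {B F : Finset E}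
    (hreach : ∀ e ∈ F, ∀ u ∈ ends e, ∀ w ∈ ends e, (underGraph ends B).Reachable u w) :
    ∀ u v, (underGraph ends F).Reachable u v → (underGraph ends B).Reachable u v := by
  have H : ∀ (u v : V) (p : (underGraph ends F).Walk u v),
      (underGraph ends B).Reachable u v := by
    intro u v p
    induction p with
    | nil => exact SimpleGraph.Reachable.refl _
    | @cons x y z h p ih =>
      obtain ⟨hne, e, he, hew⟩ := adj_elim h
      have hx : x ∈ ends e := by rw [hew, Sym2.mem_iff]; left; rfl
      have hy : y ∈ ends e := by rw [hew, Sym2.mem_iff]; right; rfl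
      exact (hreach e he x hx y hy).trans ih
  intro u v h
  obtain ⟨p⟩ := h
  exact H u v p

lemma comps_mono {B F : Finset E} (hBF : B ⊆ F)
    (h : ∀ u v : V, (underGraph ends F).Reachable u v → (underGraph ends B).Reachable u v) :
    Fintype.card (underGraph ends B).ConnectedComponent ≤
      Fintype.card (underGraph ends F).ConnectedComponent := by
  have hle := uG_mono (ends := ends) hBF
  set θ : (underGraph ends B).ConnectedComponent → (underGraph ends F).ConnectedComponent :=
    SimpleGraph.ConnectedComponent.map (SimpleGraph.Hom.ofLE hle) with hθ
  have hinj : Function.Injective θ := by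
    intro c₁ c₂ hc
    obtain ⟨u, rfl⟩ := comp_rep c₁
    obtain ⟨v, rfl⟩ := comp_rep c₂
    have e1 : θ ((underGraph ends B).connectedComponentMk u)
        = (underGraph ends F).connectedComponentMk u := by
      simp [hθ, SimpleGraph.ConnectedComponent.map_mk]
    have e2 : θ ((underGraph ends B).connectedComponentMk v)
        = (underGraph ends F).connectedComponentMk v := by
      simp [hθ, SimpleGraph.ConnectedComponent.map_mk]
    rw [e1, e2] at hc
    exact SimpleGraph.ConnectedComponent.sound (h u v (SimpleGraph.ConnectedComponent.exact hc))
  exact Fintype.card_le_of_injective θ hinj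

/-- The forest matroid. -/
def M1 (ends : E → Sym2 V) : Mat E where
  Ind := Sp ends 1
  empty := Sp.empty le_rfl
  subset := fun h hs => h.subset hs
  exch := fun hI hJ hc => exch1 hI hJ hc

/-- The pseudoforest matroid. -/
def M0 (ends : E → Sym2 V) : Mat E where
  Ind := Sp ends 0
  empty := Sp.empty (by omega)
  subset := fun h hs => h.subset hs
  exch := fun hI hJ hc => exch0 hI hJ hc

lemma exists_max1 (F : Finset E) : ∃ B, B ⊆ F ∧ Sp ends 1 B ∧ B.card = (M1 ends).rk F ∧
    ∀ e ∈ F, e ∉ B → ¬ Sp ends 1 (insert e B) := by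
  obtain ⟨B, hBF, hBi, hBc⟩ := (M1 ends).exists_basis F
  refine ⟨B, hBF, hBi, hBc, fun e heF heB hsp => ?_⟩
  have := (M1 ends).card_le_rk (show (M1 ends).Ind (insert e B) from hsp)
    (Finset.insert_subset heF hBF)
  rw [Finset.card_insert_of_notMem heB] at this
  omega

/-- All edges of `F` have endpoints connected in a maximal sparse subset. -/
lemma max1_reach {B F : Finset E} (hBF : B ⊆ F) (hB : Sp ends 1 B)
    (hmax : ∀ e ∈ F, e ∉ B → ¬ Sp ends 1 (insert e B)) :
    ∀ e ∈ F, ∀ u ∈ ends e, ∀ w ∈ ends e, (underGraph ends B).Reachable u w := by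
  intro e he u hu w hw
  by_cases heB : e ∈ B
  · exact reach_of_mem heB hu hw
  · exact reach_of_blocked hB (hmax e he heB) u hu w hw

/-- `n ≤ rk₁(F) + #comps(F)`. -/
lemma rk1_ge (F : Finset E) :
    Fintype.card V ≤ (M1 ends).rk F + Fintype.card (underGraph ends F).ConnectedComponent := by
  obtain ⟨B, hBF, hBsp, hBc, hmax⟩ := exists_max1 (ends := ends) F
  have h1 := comps_mono hBF (reach_trans_down (max1_reach hBF hBsp hmax))
  have h2 := comps_card (ends := ends) B
  omega

section Classes

variable (ends) [Fintype E]

/-- Vertex class of a component. -/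
def Vc (F : Finset E) (c : (underGraph ends F).ConnectedComponent) : Finset V :=
  Finset.univ.filter fun v => (underGraph ends F).connectedComponentMk v = c

/-- Edge fiber of a component. -/
def fib (F : Finset E) (c : (underGraph ends F).ConnectedComponent) : Finset E :=
  F.filter fun e => (underGraph ends F).connectedComponentMk (rep ends e) = c

variable {ends}

lemma mk_eq_of_mem {F : Finset E} {e : E} (he : e ∈ F) {u : V} (hu : u ∈ ends e) :
    (underGraph ends F).connectedComponentMk u
      = (underGraph ends F).connectedComponentMk (rep ends e) :=
  SimpleGraph.ConnectedComponent.sound (reach_of_mem he hu (rep_mem ends e))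

lemma fib_eq_spanned (F : Finset E) (c : (underGraph ends F).ConnectedComponent) :
    fib ends F c = spanned ends F (Vc ends F c) := by
  ext e
  rw [fib, Finset.mem_filter, mem_spanned, Vc]
  constructor
  · rintro ⟨heF, hc⟩
    refine ⟨heF, fun u hu => Finset.mem_filter.mpr ⟨Finset.mem_univ u, ?_⟩⟩
    rw [mk_eq_of_mem heF hu, hc]
  · rintro ⟨heF, hall⟩
    refine ⟨heF, ?_⟩
    have := hall _ (rep_mem ends e)
    exact (Finset.mem_filter.mp this).2

lemma card_sum_fib (F : Finset E) :
    F.card = ∑ c : (underGraph ends F).ConnectedComponent, (fib ends F c).card :=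
  Finset.card_eq_sum_card_fiberwise (fun e _ => Finset.mem_univ _)

lemma card_sum_Vc (F : Finset E) :
    Fintype.card V = ∑ c : (underGraph ends F).ConnectedComponent, (Vc ends F c).card := by
  rw [← Finset.card_univ]
  exact Finset.card_eq_sum_card_fiberwise (fun v _ => Finset.mem_univ _)

lemma Vc_nonempty (F : Finset E) (c : (underGraph ends F).ConnectedComponent) :
    (Vc ends F c).Nonempty := comp_class_nonempty c

lemma class_reach {F : Finset E} {c : (underGraph ends F).ConnectedComponent}
    {u v : V} (hu : u ∈ Vc ends F c) (hv : v ∈ Vc ends F c) :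
    (underGraph ends (fib ends F c)).Reachable u v := by
  rw [Vc, Finset.mem_filter] at hu hv
  have hr : (underGraph ends F).Reachable u v :=
    SimpleGraph.ConnectedComponent.exact (hu.2.trans hv.2.symm)
  have hcl : ∀ x y, x ∈ Vc ends F c → (underGraph ends F).Adj x y → y ∈ Vc ends F c := by
    intro x y hx hadj
    rw [Vc, Finset.mem_filter] at hx ⊢
    refine ⟨Finset.mem_univ y, ?_⟩
    rw [← hx.2]
    exact SimpleGraph.ConnectedComponent.sound hadj.reachable.symm
  have := reach_spanned hcl u v (by rw [Vc, Finset.mem_filter]; exact ⟨by simp, hu.2⟩) hr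
  rw [← fib_eq_spanned] at this
  exact this

lemma class_card_le (F : Finset E) (c : (underGraph ends F).ConnectedComponent) :
    (Vc ends F c).card ≤ (M1 ends).rk (fib ends F c) + 1 := by
  obtain ⟨B, hBF, hBsp, hBc, hmax⟩ := exists_max1 (ends := ends) (fib ends F c)
  have hreachB := max1_reach hBF hBsp hmax
  have hallreach : ∀ u v : V, u ∈ Vc ends F c → v ∈ Vc ends F c →
      (underGraph ends B).Reachable u v := fun u v hu hv =>
    reach_trans_down hreachB u v (class_reach hu hv)
  -- #comps(B) ≤ n - |Vc| + 1
  have hcomps : Fintype.card (underGraph ends B).ConnectedComponent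
      ≤ Fintype.card V - (Vc ends F c).card + 1 := by
    have huniv : (Finset.univ : Finset (underGraph ends B).ConnectedComponent)
        = Finset.univ.image ((underGraph ends B).connectedComponentMk) := by
      ext d
      simp only [Finset.mem_univ, true_iff, Finset.mem_image]
      obtain ⟨v, rfl⟩ := comp_rep d
      exact ⟨v, by simp⟩
    have hsplit : (Finset.univ : Finset V) = Vc ends F c ∪ (Finset.univ \ Vc ends F c) := by
      rw [Finset.union_sdiff_of_subset (Finset.subset_univ _)]
    rw [← Finset.card_univ, huniv, hsplit, Finset.image_union]
    have h1 : ((Vc ends F c).image ((underGraph ends B).connectedComponentMk)).card ≤ 1 := by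
      rw [Finset.card_le_one]
      intro x hx y hy
      obtain ⟨u, hu, rfl⟩ := Finset.mem_image.mp hx
      obtain ⟨v, hv, rfl⟩ := Finset.mem_image.mp hy
      exact SimpleGraph.ConnectedComponent.sound (hallreach u v hu hv)
    have h2 : ((Finset.univ \ Vc ends F c).image
        ((underGraph ends B).connectedComponentMk)).card ≤ Fintype.card V - (Vc ends F c).card := by
      refine le_trans (Finset.card_image_le) ?_
      rw [Finset.card_sdiff_of_subset (Finset.subset_univ _), Finset.card_univ]
    have := Finset.card_union_le ((Vc ends F c).image ((underGraph ends B).connectedComponentMk))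
      ((Finset.univ \ Vc ends F c).image ((underGraph ends B).connectedComponentMk))
    omega
  have hcc := comps_card (ends := ends) B
  have hVle : (Vc ends F c).card ≤ Fintype.card V := by
    rw [← Finset.card_univ]; exact Finset.card_le_card (Finset.subset_univ _)
  omega

lemma exists_Pc (F : Finset E) (c : (underGraph ends F).ConnectedComponent) :
    ∃ P, P ⊆ fib ends F c ∧ Sp ends 0 P ∧
      min (fib ends F c).card (Vc ends F c).card ≤ P.card := by
  obtain ⟨B, hBF, hBsp, hBc, hmax⟩ := exists_max1 (ends := ends) (fib ends F c)
  have hBle : B.card ≤ (fib ends F c).card := Finset.card_le_card hBF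
  by_cases hcs : (fib ends F c).card = B.card
  · have hBeq : B = fib ends F c := Finset.eq_of_subset_of_card_le hBF (by omega)
    exact ⟨fib ends F c, subset_rfl, sp1_to_sp0 (hBeq ▸ hBsp), min_le_left _ _⟩
  · have hne : (fib ends F c \ B).Nonempty := by
      rw [Finset.sdiff_nonempty]
      intro hsub
      exact hcs (le_antisymm (Finset.card_le_card hsub) hBle)
    obtain ⟨e, he⟩ := hne
    rw [Finset.mem_sdiff] at he
    refine ⟨insert e B, Finset.insert_subset he.1 hBF, sp0_insert hBsp e, ?_⟩
    rw [Finset.card_insert_of_notMem he.2]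
    have := class_card_le F c
    have hm := min_le_right (fib ends F c).card (Vc ends F c).card
    omega

lemma rk0_ge (F : Finset E) :
    ∑ c : (underGraph ends F).ConnectedComponent,
      min (fib ends F c).card (Vc ends F c).card ≤ (M0 ends).rk F := by
  choose Pc hPc1 hPc2 hPc3 using exists_Pc (ends := ends) F
  set P : Finset E := Finset.univ.biUnion Pc with hP
  have hPF : P ⊆ F := by
    intro e he
    obtain ⟨c, _, hec⟩ := Finset.mem_biUnion.mp he
    exact (Finset.filter_subset _ F) (hPc1 c hec)
  have hPcard : P.card = ∑ c, (Pc c).card := by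
    rw [hP]
    apply Finset.card_biUnion
    intro c₁ _ c₂ _ hne
    apply Finset.disjoint_left.mpr
    intro e he₁ he₂
    have h1 := (Finset.mem_filter.mp (hPc1 c₁ he₁)).2
    have h2 := (Finset.mem_filter.mp (hPc1 c₂ he₂)).2
    exact hne (h1 ▸ h2 ▸ rfl)
  have hPsp : Sp ends 0 P := by
    intro S hS
    have hfib : (spanned ends P S).card = ∑ c : (underGraph ends F).ConnectedComponent,
        ((spanned ends P S).filter fun e =>
          (underGraph ends F).connectedComponentMk (rep ends e) = c).card :=
      Finset.card_eq_sum_card_fiberwise (fun e _ => Finset.mem_univ _)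
    have hsub : ∀ c, ((spanned ends P S).filter fun e =>
        (underGraph ends F).connectedComponentMk (rep ends e) = c)
        ⊆ spanned ends (Pc c) (S.filter fun v =>
          (underGraph ends F).connectedComponentMk v = c) := by
      intro c e he
      rw [Finset.mem_filter] at he
      obtain ⟨hesp, hec⟩ := he
      rw [mem_spanned] at hesp
      obtain ⟨heP, hends⟩ := hesp
      obtain ⟨c', _, hec'⟩ := Finset.mem_biUnion.mp heP
      have hc' : c' = c := by
        have h0 := (Finset.mem_filter.mp (hPc1 c' hec')).2
        rw [h0] at hec
        exact hec
      rw [mem_spanned]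
      subst hc'
      refine ⟨hec', fun u hu => ?_⟩
      rw [Finset.mem_filter]
      refine ⟨hends u hu, ?_⟩
      have hefib := hPc1 c' hec'
      rw [fib, Finset.mem_filter] at hefib
      rw [mk_eq_of_mem hefib.1 hu, hefib.2]
    have hsum : ∑ c : (underGraph ends F).ConnectedComponent,
        (S.filter fun v => (underGraph ends F).connectedComponentMk v = c).card = S.card :=
      (Finset.card_eq_sum_card_fiberwise (fun v _ => Finset.mem_univ _)).symm
    have hle : (spanned ends P S).card ≤ S.card := by
      rw [hfib, ← hsum]
      apply Finset.sum_le_sum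
      intro c _
      exact le_trans (Finset.card_le_card (hsub c)) (sp0_card_le (hPc2 c) _)
    omega
  have := (M0 ends).card_le_rk (show (M0 ends).Ind P from hPsp) hPF
  calc ∑ c, min (fib ends F c).card (Vc ends F c).card
      ≤ ∑ c, (Pc c).card := Finset.sum_le_sum fun c _ => hPc3 c
    _ = P.card := hPcard.symm
    _ ≤ (M0 ends).rk F := this

lemma harith {k l : ℕ} (hk : 1 ≤ k) (hl : l ≤ k) (a m : ℕ) (hm : 1 ≤ m)
    (h : a + l ≤ k * m) : a ≤ l * (m - 1) + (k - l) * min a m := by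
  obtain ⟨m', rfl⟩ : ∃ m', m = m' + 1 := ⟨m - 1, by omega⟩
  obtain ⟨d, rfl⟩ : ∃ d, k = l + d := ⟨k - l, by omega⟩
  simp only [Nat.add_sub_cancel, Nat.add_sub_cancel_left]
  rcases le_or_gt (m' + 1) a with hma | hma
  · rw [Nat.min_eq_right hma]
    have hid : (l + d) * (m' + 1) = l * m' + d * (m' + 1) + l := by ring
    omega
  · rw [Nat.min_eq_left (by omega)]
    rcases Nat.eq_zero_or_pos l with rfl | hlpos
    · have : 1 ≤ d := by omega
      have := Nat.le_mul_of_pos_left a (show 0 < d by omega)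
      simpa using by omega
    · have h1 : a ≤ m' := by omega
      have h2 : a ≤ l * m' := le_trans h1 (Nat.le_mul_of_pos_left m' hlpos)
      omega

/-- The key counting condition for matroid union, from `(k,l)`-sparsity. -/
lemma cond_graph {k l : ℕ} (hk : 1 ≤ k) (hl : l ≤ k)
    (hsp : Sparse ends Finset.univ k l) (F : Finset E) :
    F.card ≤ l * (M1 ends).rk F + (k - l) * (M0 ends).rk F := by
  have hD : ∀ c : (underGraph ends F).ConnectedComponent,
      (fib ends F c).card + l ≤ k * (Vc ends F c).card := by
    intro c
    have hsub : fib ends F c ⊆ spanned ends Finset.univ (Vc ends F c) := by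
      rw [fib_eq_spanned]
      exact spanned_mono (Finset.subset_univ F) _
    have h1 := hsp _ (Vc_nonempty F c)
    have h2 := Finset.card_le_card hsub
    omega
  have hsum : F.card ≤ ∑ c : (underGraph ends F).ConnectedComponent,
      (l * ((Vc ends F c).card - 1) +
        (k - l) * min (fib ends F c).card (Vc ends F c).card) := by
    rw [card_sum_fib (ends := ends) F]
    apply Finset.sum_le_sum
    intro c _
    exact harith hk hl _ _ (Finset.card_pos.mpr (Vc_nonempty F c)) (hD c)
  rw [Finset.sum_add_distrib, ← Finset.mul_sum, ← Finset.mul_sum] at hsum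
  have hS1 : ∑ c : (underGraph ends F).ConnectedComponent, ((Vc ends F c).card - 1)
      ≤ (M1 ends).rk F := by
    have h1 := rk1_ge (ends := ends) F
    have h2 := card_sum_Vc (ends := ends) F
    have h3 : ∑ c : (underGraph ends F).ConnectedComponent, ((Vc ends F c).card - 1)
        + Fintype.card (underGraph ends F).ConnectedComponent
        = ∑ c : (underGraph ends F).ConnectedComponent, (Vc ends F c).card := by
      rw [← Finset.card_univ
        (α := (underGraph ends F).ConnectedComponent), Finset.card_eq_sum_ones,
        ← Finset.sum_add_distrib]
      apply Finset.sum_congr rfl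
      intro c _
      have := Finset.card_pos.mpr (Vc_nonempty F c)
      omega
    omega
  have hS0 := rk0_ge (ends := ends) F
  have hm1 := Nat.mul_le_mul_left l hS1
  have hm0 := Nat.mul_le_mul_left (k - l) hS0
  omega

end Classes

end Counting

lemma card_filter_fin_lt {k l : ℕ} (hl : l ≤ k) :
    ((Finset.univ : Finset (Fin k)).filter fun i : Fin k => (i : ℕ) < l).card = l := by
  have himg : ((Finset.univ : Finset (Fin k)).filter fun i : Fin k => (i : ℕ) < l)
      = Finset.image (Fin.castLE hl) (Finset.univ : Finset (Fin l)) := by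
    ext i
    simp only [Finset.mem_filter, Finset.mem_univ, true_and, Finset.mem_image]
    constructor
    · intro hi
      exact ⟨⟨(i : ℕ), hi⟩, by ext; rfl⟩
    · rintro ⟨j, rfl⟩
      exact j.2
  rw [himg, Finset.card_image_of_injective _ (Fin.castLE_injective hl),
    Finset.card_univ, Fintype.card_fin]

end TreeMap

open TreeMap

/-- For `0 ≤ l ≤ k` and `G` with `kn - l` edges: `G` is `(k,l)`-sparse iff `G`
decomposes into `l` edge-disjoint spanning trees and `k - l` edge-disjoint maps. -/
theorem stmt8 [Fintype V] [Fintype E] (k l : ℕ) (hl : l ≤ k) (ends : E → Sym2 V)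
    (hcard : Fintype.card E + l = k * Fintype.card V) :
    Sparse ends Finset.univ k l ↔
      ∃ col : E → Fin k,
        (∀ i : Fin k, (i : ℕ) < l →
          IsSpanningTree ends (Finset.univ.filter (fun e => col e = i))) ∧
        (∀ i : Fin k, l ≤ (i : ℕ) →
          IsMapOn ends (Finset.univ.filter (fun e => col e = i))) := by
  classical
  by_cases hk0 : k = 0
  · subst hk0
    have hl0 : l = 0 := by omega
    subst hl0
    have hE : IsEmpty E := Fintype.card_eq_zero_iff.mp (by omega)
    constructor
    · intro _
      exact ⟨fun e => hE.elim e, fun i _ => i.elim0, fun i _ => i.elim0⟩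
    · intro _ S hS
      have h1 : spanned ends Finset.univ S ⊆ (Finset.univ : Finset E) :=
        TreeMap.spanned_subset _ _
      have h2 : (Finset.univ : Finset E).card = 0 := by
        rw [Finset.card_univ]; omega
      have := Finset.card_le_card h1
      omega
  by_cases hV0 : Fintype.card V = 0
  · have hVempty : IsEmpty V := Fintype.card_eq_zero_iff.mp hV0
    rw [hV0, Nat.mul_zero] at hcard
    have hE : IsEmpty E := by
      refine Fintype.card_eq_zero_iff.mp ?_
      omega
    have hl0 : l = 0 := by omega
    constructor
    · intro _
      refine ⟨fun e => hE.elim e, fun i hi => by omega, fun i _ => ?_⟩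
      exact ⟨fun e => hE.elim e, fun e he => hE.elim e, fun v => hVempty.elim v⟩
    · intro _ S hS
      obtain ⟨v, _⟩ := hS
      exact (hVempty.elim v)
  -- main case
  have hk : 1 ≤ k := by omega
  have hV : 0 < Fintype.card V := by omega
  have hVne : Nonempty V := Fintype.card_pos_iff.mp hV
  have hunivV : (Finset.univ : Finset V).Nonempty := Finset.univ_nonempty
  constructor
  · -- hard direction
    intro hsp
    set Ms : Fin k → Mat E := fun i => if (i : ℕ) < l then M1 ends else M0 ends with hMs
    have hsplitsum : ∀ F : Finset E,
        ∑ i, (Ms i).rk F = l * (M1 ends).rk F + (k - l) * (M0 ends).rk F := by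
      intro F
      have hcongr : ∀ i : Fin k, (Ms i).rk F
          = if (i : ℕ) < l then (M1 ends).rk F else (M0 ends).rk F := by
        intro i
        simp only [hMs]
        by_cases hi : (i : ℕ) < l
        · rw [if_pos hi, if_pos hi]
        · rw [if_neg hi, if_neg hi]
      rw [Finset.sum_congr rfl (fun i _ => hcongr i), Finset.sum_ite,
        Finset.sum_const, Finset.sum_const, smul_eq_mul, smul_eq_mul]
      have hfc := TreeMap.card_filter_fin_lt hl
      have hnc : ((Finset.univ : Finset (Fin k)).filter
          fun i : Fin k => ¬ (i : ℕ) < l).card = k - l := by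
        have := Finset.card_filter_add_card_filter_not
          (s := (Finset.univ : Finset (Fin k))) (p := fun i : Fin k => (i : ℕ) < l)
        rw [Finset.card_univ, Fintype.card_fin] at this
        omega
      rw [hfc, hnc]
    have hcond : ∀ F ⊆ (Finset.univ : Finset E), F.card ≤ ∑ i, (Ms i).rk F := by
      intro F _
      rw [hsplitsum F]
      exact cond_graph hk hl hsp F
    obtain ⟨col, hcol⟩ := union_theorem (by omega : 0 < k) Finset.univ Ms hcond
    have hind1 : ∀ i : Fin k, (i : ℕ) < l →
        Sp ends 1 (Finset.univ.filter fun e => col e = i) := by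
      intro i hi
      have := hcol i
      simp only [hMs, if_pos hi] at this
      exact this
    have hind0 : ∀ i : Fin k, l ≤ (i : ℕ) →
        Sp ends 0 (Finset.univ.filter fun e => col e = i) := by
      intro i hi
      have := hcol i
      simp only [hMs, if_neg (not_lt.mpr hi)] at this
      exact this
    have hsumD : ∑ i, (Finset.univ.filter fun e => col e = i).card = Fintype.card E := by
      rw [← Finset.card_univ (α := E)]
      exact (Finset.card_eq_sum_card_fiberwise (fun e _ => Finset.mem_univ (col e))).symm
    set cfun : Fin k → ℕ := fun i => if (i : ℕ) < l then 1 else 0 with hcfun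
    have hcl : ∑ i, cfun i = l := by
      simp only [hcfun]
      rw [Finset.sum_ite, Finset.sum_const, Finset.sum_const, smul_eq_mul,
        smul_eq_mul, TreeMap.card_filter_fin_lt hl]
      omega
    have hball : ∀ i : Fin k,
        (Finset.univ.filter fun e => col e = i).card + cfun i ≤ Fintype.card V := by
      intro i
      by_cases hi : (i : ℕ) < l
      · have := hind1 i hi Finset.univ hunivV
        rw [TreeMap.spanned_univ] at this
        simp only [hcfun, if_pos hi]
        rw [Finset.card_univ] at this
        omega
      · have := hind0 i (not_lt.mp hi) Finset.univ hunivV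
        rw [TreeMap.spanned_univ] at this
        simp only [hcfun, if_neg hi]
        rw [Finset.card_univ] at this
        omega
    have htot : ∑ i, ((Finset.univ.filter fun e => col e = i).card + cfun i)
        = k * Fintype.card V := by
      rw [Finset.sum_add_distrib, hsumD, hcl, hcard]
    have heach : ∀ i : Fin k,
        (Finset.univ.filter fun e => col e = i).card + cfun i = Fintype.card V := by
      by_contra hcon
      push_neg at hcon
      obtain ⟨i₀, hi₀⟩ := hcon
      have hlt : ∑ i, ((Finset.univ.filter fun e => col e = i).card + cfun i)
          < ∑ _i : Fin k, Fintype.card V :=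
        Finset.sum_lt_sum (fun i _ => hball i)
          ⟨i₀, Finset.mem_univ _, lt_of_le_of_ne (hball i₀) hi₀⟩
      rw [htot] at hlt
      simp only [Finset.sum_const, Finset.card_univ, Fintype.card_fin, smul_eq_mul] at hlt
      omega
    refine ⟨col, ?_, ?_⟩
    · intro i hi
      have hc : (Finset.univ.filter fun e => col e = i).card + 1 = Fintype.card V := by
        have := heach i
        simp only [hcfun, if_pos hi] at this
        exact this
      refine ⟨?_, hc⟩
      have hconn := conn_of_tight (hind1 i hi)
        (fun e _ u _ => Finset.mem_univ u) hunivV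
        (by rw [Finset.card_univ]; omega)
      rw [SimpleGraph.connected_iff]
      exact ⟨fun u v => hconn u (Finset.mem_univ u) v (Finset.mem_univ v), hVne⟩
    · intro i hi
      have hc : (Finset.univ.filter fun e => col e = i).card = Fintype.card V := by
        have := heach i
        simp only [hcfun, if_neg (not_lt.mpr hi)] at this
        omega
      exact map_of_sparse (hind0 i hi) hc
  · -- easy direction
    rintro ⟨col, htree, hmap⟩ S hS
    have hsp1 : ∀ i : Fin k, (i : ℕ) < l →
        Sp ends 1 (Finset.univ.filter fun e => col e = i) := fun i hi =>
      sparse_of_tree (htree i hi).1 (htree i hi).2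
    have hsp0 : ∀ i : Fin k, l ≤ (i : ℕ) →
        Sp ends 0 (Finset.univ.filter fun e => col e = i) := fun i hi =>
      (sparse_of_map (hmap i hi)).1
    have hfib : (spanned ends Finset.univ S).card = ∑ i : Fin k,
        ((spanned ends Finset.univ S).filter fun e => col e = i).card :=
      Finset.card_eq_sum_card_fiberwise (fun e _ => Finset.mem_univ _)
    have hfil : ∀ i : Fin k, (spanned ends Finset.univ S).filter (fun e => col e = i)
        = spanned ends (Finset.univ.filter fun e => col e = i) S := by
      intro i
      ext e
      rw [Finset.mem_filter, TreeMap.mem_spanned, TreeMap.mem_spanned, Finset.mem_filter]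
      tauto
    set cfun : Fin k → ℕ := fun i => if (i : ℕ) < l then 1 else 0 with hcfun
    have hcl : ∑ i, cfun i = l := by
      simp only [hcfun]
      rw [Finset.sum_ite, Finset.sum_const, Finset.sum_const, smul_eq_mul,
        smul_eq_mul, TreeMap.card_filter_fin_lt hl]
      omega
    have hball : ∀ i : Fin k,
        (spanned ends (Finset.univ.filter fun e => col e = i) S).card + cfun i ≤ S.card := by
      intro i
      by_cases hi : (i : ℕ) < l
      · have := hsp1 i hi S hS
        simp only [hcfun, if_pos hi]
        omega
      · have := hsp0 i (not_lt.mp hi) S hS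
        simp only [hcfun, if_neg hi]
        omega
    have : (spanned ends Finset.univ S).card + l ≤ ∑ _i : Fin k, S.card := by
      rw [hfib, ← hcl, ← Finset.sum_add_distrib]
      apply Finset.sum_le_sum
      intro i _
      rw [hfil i]
      exact hball i
    simp only [Finset.sum_const, Finset.card_univ, Fintype.card_fin, smul_eq_mul] at this
    exact this
end
end

section
/- Let 0 ≤ ℓ ≤ 2k-1 and suppose G is a (k,ℓ)-sparse multigraph on n vertices with fewer than kn - ℓ edges. Then there exist two vertices u, v (not necessarily distinct when ℓ ≤ k-1) such that adding the edge uv to G preserves (k,ℓ)-sparsity. -/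
open scoped Classical

noncomputable section

/- We model a finite multigraph as a vertex type `V`, an edge (index) type `E`,
and an endpoint map `ends : E → Sym2 V`; loops are edges whose endpoints form a
diagonal unordered pair.  A (sub)graph is given by a `Finset` of edge indices. -/

variable {V E : Type*}

section Aux

variable {V E : Type*}

lemma spanned_inter_eq (ends : E → Sym2 V) (F : Finset E) (X Y : Finset V) :
    spanned ends F X ∩ spanned ends F Y = spanned ends F (X ∩ Y) := by
  ext e
  simp only [spanned, Finset.mem_inter, Finset.mem_filter]
  aesop

lemma spanned_union_subset (ends : E → Sym2 V) (F : Finset E) (X Y : Finset V) :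
    spanned ends F X ∪ spanned ends F Y ⊆ spanned ends F (X ∪ Y) := by
  intro e he
  simp only [spanned, Finset.mem_union, Finset.mem_filter] at he ⊢
  aesop

lemma spanned_supermodular (ends : E → Sym2 V) (F : Finset E) (X Y : Finset V) :
    (spanned ends F X).card + (spanned ends F Y).card ≤
      (spanned ends F (X ∪ Y)).card + (spanned ends F (X ∩ Y)).card := by
  have h1 := Finset.card_union_add_card_inter (spanned ends F X) (spanned ends F Y)
  rw [spanned_inter_eq] at h1
  have h2 := Finset.card_le_card (spanned_union_subset ends F X Y)
  omega

lemma filter_sum_card {E : Type*} [Fintype E] (p : E ⊕ Unit → Prop) :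
    (Finset.univ.filter p).card = (Finset.univ.filter (fun e : E => p (Sum.inl e))).card +
      (Finset.univ.filter (fun u : Unit => p (Sum.inr u))).card := by
  have h : (Finset.univ.filter p) =
      ((Finset.univ.filter (fun e : E => p (Sum.inl e))).map ⟨Sum.inl, Sum.inl_injective⟩) ∪
      ((Finset.univ.filter (fun u : Unit => p (Sum.inr u))).map ⟨Sum.inr, Sum.inr_injective⟩) := by
    ext x
    rcases x with e | u
    · simp
    · simp
  rw [h, Finset.card_union_of_disjoint, Finset.card_map, Finset.card_map]
  simp [Finset.disjoint_left]

lemma spanned_new_card {V E : Type*} [Fintype E] (ends : E → Sym2 V) (u v : V) (S : Finset V) :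
    (spanned (Sum.elim ends (fun _ : Unit => s(u, v))) (Finset.univ : Finset (E ⊕ Unit)) S).card =
      (spanned ends Finset.univ S).card + (if u ∈ S ∧ v ∈ S then 1 else 0) := by
  classical
  unfold spanned
  rw [filter_sum_card]
  congr 1
  by_cases h : u ∈ S ∧ v ∈ S
  · rw [if_pos h]
    rw [Finset.filter_true_of_mem, Finset.card_univ]
    · rfl
    · intro x _ w hw
      simp only [Sum.elim_inr, Sym2.mem_iff] at hw
      rcases hw with rfl | rfl
      · exact h.1
      · exact h.2
  · rw [if_neg h]
    rw [Finset.filter_false_of_mem, Finset.card_empty]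
    intro x _ hx
    apply h
    constructor
    · exact hx u (by simp)
    · exact hx v (by simp)

end Aux

/-- A `(k,l)`-sparse graph (`0 ≤ l ≤ 2k-1`) with fewer than `kn - l` edges admits
two (not necessarily distinct) vertices `u`, `v` such that adding the edge `uv`
preserves `(k,l)`-sparsity. -/

theorem stmt10 [Fintype V] [Fintype E] (k l : ℕ) (hl : l ≤ 2 * k - 1)
    (ends : E → Sym2 V) (hs : Sparse ends Finset.univ k l)
    (hcard : Fintype.card E + l < k * Fintype.card V) :
    ∃ u v : V,
      Sparse (Sum.elim ends (fun _ : Unit => s(u, v)))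
        (Finset.univ : Finset (E ⊕ Unit)) k l := by
  classical
  -- Basic consequences of the cardinality hypothesis
  have hVpos : 0 < Fintype.card V := by
    by_contra h
    push_neg at h
    interval_cases h' : Fintype.card V
    omega
  -- tightness predicate
  set Tight : Finset V → Prop :=
    fun S => S.Nonempty ∧ (spanned ends Finset.univ S).card + l = k * S.card with hTight
  -- union of intersecting tight sets is tight
  have tight_union : ∀ X Y : Finset V, Tight X → Tight Y → (X ∩ Y).Nonempty →
      Tight (X ∪ Y) := by
    intro X Y hX hY hXY
    have hsup := spanned_supermodular ends (Finset.univ : Finset E) X Y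
    have h1 : (spanned ends Finset.univ (X ∪ Y)).card + l ≤ k * (X ∪ Y).card :=
      hs _ (hX.1.mono Finset.subset_union_left)
    have h2 : (spanned ends Finset.univ (X ∩ Y)).card + l ≤ k * (X ∩ Y).card :=
      hs _ hXY
    have hc : X.card + Y.card = (X ∪ Y).card + (X ∩ Y).card :=
      (Finset.card_union_add_card_inter X Y).symm
    have hmul : k * X.card + k * Y.card = k * (X ∪ Y).card + k * (X ∩ Y).card := by
      rw [← Nat.mul_add, ← Nat.mul_add, hc]
    refine ⟨hX.1.mono Finset.subset_union_left, ?_⟩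
    have h4 := hX.2
    have h5 := hY.2
    -- linear arithmetic over the (atomic) products
    nlinarith [hsup, h1, h2, hmul, h4, h5]
  -- univ is not tight
  have huniv : ¬ Tight Finset.univ := by
    intro h
    have : spanned ends Finset.univ (Finset.univ : Finset V) = Finset.univ := by
      ext e
      simp [spanned]
    rw [hTight] at h
    have h2 := h.2
    rw [this, Finset.card_univ, Finset.card_univ] at h2
    omega
  -- find u v such that no tight set contains both
  have key : ∃ u v : V, ∀ S : Finset V, Tight S → ¬ (u ∈ S ∧ v ∈ S) := by
    by_cases hex : ∃ S, Tight S
    · -- take a tight set of maximal cardinality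
      obtain ⟨T0, hT0⟩ := hex
      obtain ⟨T, hTmem, hTmax⟩ := Finset.exists_max_image
        ((Finset.univ : Finset (Finset V)).filter Tight) Finset.card
        ⟨T0, Finset.mem_filter.mpr ⟨Finset.mem_univ _, hT0⟩⟩
      have hT : Tight T := (Finset.mem_filter.mp hTmem).2
      have hTne : T ≠ Finset.univ := fun h => huniv (h ▸ hT)
      obtain ⟨v, hv⟩ : ∃ v, v ∉ T := by
        by_contra h
        push_neg at h
        exact hTne (Finset.eq_univ_iff_forall.mpr h)
      obtain ⟨u, hu⟩ := hT.1
      refine ⟨u, v, ?_⟩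
      rintro S hS ⟨huS, hvS⟩
      have hun : Tight (S ∪ T) := tight_union S T hS hT ⟨u, Finset.mem_inter.mpr ⟨huS, hu⟩⟩
      have hle : (S ∪ T).card ≤ T.card := hTmax _ (Finset.mem_filter.mpr ⟨Finset.mem_univ _, hun⟩)
      have heq : S ∪ T = T := Finset.eq_of_subset_of_card_le Finset.subset_union_right hle |>.symm
      exact hv (heq ▸ Finset.mem_union_left T hvS)
    · push_neg at hex
      obtain ⟨v⟩ := Fintype.card_pos_iff.mp hVpos
      exact ⟨v, v, fun S hS _ => hex S hS⟩
  obtain ⟨u, v, hkey⟩ := key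
  refine ⟨u, v, ?_⟩
  intro S hSne
  rw [spanned_new_card]
  by_cases h : u ∈ S ∧ v ∈ S
  · rw [if_pos h]
    have hsp := hs S hSne
    have hnt : ¬ Tight S := fun ht => hkey S ht h
    rw [hTight] at hnt
    simp only [hSne, true_and] at hnt
    omega
  · rw [if_neg h]
    simpa using hs S hSne
end
end

section
/- For every finite multigraph G and positive integer k, the graph G decomposes into k edge-disjoint spanning pseudoforests (graphs with at most one cycle per connected component) if and only if every vertex subset V' spans at most k|V'| edges. -/
open scoped Classical

noncomputable section

/- We model a finite multigraph as a vertex type `V`, an edge (index) type `E`,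
and an endpoint map `ends : E → Sym2 V`; loops are edges whose endpoints form a
diagonal unordered pair.  A (sub)graph is given by a `Finset` of edge indices. -/

variable {V E : Type*}

/- ### Auxiliary lemmas -/

/-- All endpoints of an edge of `P` lie in the same connected component. -/
lemma comp_eq_of_mem_ends (ends : E → Sym2 V) (P : Finset E) {e : E} (he : e ∈ P)
    {u w : V} (hu : u ∈ ends e) (hw : w ∈ ends e) :
    (underGraph ends P).connectedComponentMk u =
      (underGraph ends P).connectedComponentMk w := by
  obtain ⟨a, b, hab⟩ : ∃ a b, ends e = s(a, b) :=
    ⟨(ends e).out.1, (ends e).out.2, by rw [Sym2.mk, (ends e).out_eq]⟩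
  rw [hab, Sym2.mem_iff] at hu hw
  by_cases hne : a = b
  · subst hne; rcases hu with rfl | rfl <;> rcases hw with rfl | rfl <;> rfl
  · have hadj : (underGraph ends P).Adj a b := by
      rw [underGraph, SimpleGraph.fromRel_adj]
      exact ⟨hne, Or.inl ⟨e, he, hab⟩⟩
    have hcc := SimpleGraph.ConnectedComponent.sound hadj.reachable
    rcases hu with rfl | rfl <;> rcases hw with rfl | rfl <;> simp [hcc]

/-- A pseudoforest spans at most `|S|` edges on any vertex subset `S`. -/
lemma pseudoforest_card_bound [Fintype V] [Fintype E] (ends : E → Sym2 V) (P : Finset E)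
    (hP : IsPseudoforest ends P) (A : Finset E) (hA : A ⊆ P) (S : Finset V)
    (hAS : ∀ e ∈ A, ∀ v ∈ ends e, v ∈ S) : A.card ≤ S.card := by
  classical
  set G := underGraph ends P with hG
  -- the set of vertices touched by `A`
  set T : Finset V := Finset.univ.filter (fun v => ∃ e ∈ A, v ∈ ends e) with hT
  have hTS : T ⊆ S := by
    intro v hv
    rw [hT, Finset.mem_filter] at hv
    obtain ⟨-, e, he, hve⟩ := hv
    exact hAS e he v hve
  refine le_trans ?_ (Finset.card_le_card hTS)
  -- a representative endpoint of each edge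
  set hd : E → V := fun e => (ends e).out.1 with hhd
  have hd_mem : ∀ e, hd e ∈ ends e := fun e => by
    rw [hhd]; exact Sym2.out_fst_mem (ends e)
  set f : E → G.ConnectedComponent := fun e => G.connectedComponentMk (hd e) with hf
  -- decompose `A` by connected components
  set B : Finset G.ConnectedComponent := A.image f with hB
  have hcard : A.card = ∑ c ∈ B, (A.filter (fun e => f e = c)).card :=
    Finset.card_eq_sum_card_fiberwise (fun e he => Finset.mem_image_of_mem f he)
  have hTcard : ∑ c ∈ B, (T.filter (fun v => G.connectedComponentMk v = c)).card ≤ T.card := by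
    rw [← Finset.card_biUnion]
    · exact Finset.card_le_card (fun v hv => (Finset.mem_biUnion.mp hv).choose_spec.2 |>
        Finset.mem_filter.mp |>.1)
    · intro c₁ h₁ c₂ h₂ hne
      simp only [Function.onFun]; rw [Finset.disjoint_left]
      intro v hv₁ hv₂
      rw [Finset.mem_filter] at hv₁ hv₂
      exact hne (hv₁.2.symm.trans hv₂.2)
  rw [hcard]
  refine le_trans (Finset.sum_le_sum ?_) hTcard
  -- the per-component bound
  intro c hc
  obtain ⟨e₀, he₀A, he₀c⟩ := Finset.mem_image.mp hc
  set v₀ : V := hd e₀ with hv₀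
  have hv₀T : v₀ ∈ T := by
    rw [hT, Finset.mem_filter]
    exact ⟨Finset.mem_univ _, e₀, he₀A, hd_mem e₀⟩
  have hcomp_v₀ : G.connectedComponentMk v₀ = c := he₀c
  -- the edge and vertex sets of the component `c`
  set Ec : Finset E := P.filter (fun e => ∀ u ∈ ends e,
      G.connectedComponentMk u = G.connectedComponentMk v₀) with hEc
  set Vc : Finset V := Finset.univ.filter (fun u =>
      G.connectedComponentMk u = G.connectedComponentMk v₀) with hVc
  have hPF : Ec.card ≤ Vc.card := hP v₀
  -- edges of `A` in component `c` are exactly the edges of `Ec` lying in `A`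
  have hAc : A.filter (fun e => f e = c) = Ec.filter (fun e => e ∈ A) := by
    ext e
    simp only [Finset.mem_filter, hEc]
    constructor
    · rintro ⟨heA, hec⟩
      refine ⟨⟨hA heA, fun u hu => ?_⟩, heA⟩
      rw [comp_eq_of_mem_ends ends P (hA heA) hu (hd_mem e)]
      rw [← hcomp_v₀] at hec
      exact hec
    · rintro ⟨⟨heP, hall⟩, heA⟩
      refine ⟨heA, ?_⟩
      show G.connectedComponentMk (hd e) = c
      rw [hall (hd e) (hd_mem e), hcomp_v₀]
  -- vertices of `T` in component `c` are exactly the vertices of `Vc` lying in `T`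
  have hTc : T.filter (fun v => G.connectedComponentMk v = c) = Vc.filter (fun v => v ∈ T) := by
    ext v
    simp only [Finset.mem_filter, hVc, Finset.mem_univ, true_and]
    rw [← hcomp_v₀]
    tauto
  rw [hAc, hTc]
  -- the key injection : vertices of the component outside `T` inject into `Ec \ A`
  have hinj : (Vc.filter (fun v => v ∉ T)).card ≤ (Ec.filter (fun e => e ∉ A)).card := by
    -- every vertex of the component outside `T` has a suitable outgoing edge
    have hstep : ∀ u ∈ Vc.filter (fun v => v ∉ T), ∃ e,
        e ∈ Ec.filter (fun e => e ∉ A) ∧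
          ∃ u', ends e = s(u, u') ∧ G.dist u' v₀ < G.dist u v₀ := by
      intro u hu
      rw [Finset.mem_filter, hVc, Finset.mem_filter] at hu
      obtain ⟨⟨-, hcompu⟩, huT⟩ := hu
      have hne : u ≠ v₀ := by rintro rfl; exact huT hv₀T
      have hreach : G.Reachable u v₀ := SimpleGraph.ConnectedComponent.exact hcompu
      have hpos : 0 < G.dist u v₀ := hreach.pos_dist_of_ne hne
      obtain ⟨p, hp⟩ := hreach.exists_walk_length_eq_dist
      cases p with
      | nil => rw [← hp] at hpos; simp at hpos
      | cons hadj q =>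
        rename_i x
        have hdx : G.dist x v₀ < G.dist u v₀ := by
          have h1 : G.dist x v₀ ≤ q.length := SimpleGraph.dist_le q
          have h2 : q.length + 1 = G.dist u v₀ := by
            rw [← hp]; simp [SimpleGraph.Walk.length_cons]
          omega
        rw [hG, underGraph, SimpleGraph.fromRel_adj] at hadj
        obtain ⟨hux, he⟩ := hadj
        have hex : ∃ e ∈ P, ends e = s(u, x) := by
          rcases he with h | h
          · exact h
          · obtain ⟨e, heP, hee⟩ := h
            exact ⟨e, heP, by rw [hee, Sym2.eq_swap]⟩
        obtain ⟨e, heP, hee⟩ := hex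
        have hue : u ∈ ends e := by rw [hee]; exact Sym2.mem_mk_left u x
        have heA : e ∉ A := by
          intro heA
          apply huT
          rw [hT, Finset.mem_filter]
          exact ⟨Finset.mem_univ _, e, heA, hue⟩
        have heEc : e ∈ Ec := by
          rw [hEc, Finset.mem_filter]
          refine ⟨heP, fun w hw => ?_⟩
          exact (comp_eq_of_mem_ends ends P heP hw hue).trans hcompu
        exact ⟨e, Finset.mem_filter.mpr ⟨heEc, heA⟩, x, hee, hdx⟩
    by_cases hempty : (Vc.filter (fun v => v ∉ T)).Nonempty
    · obtain ⟨u₀, hu₀⟩ := hempty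
      obtain ⟨e₁, -, -⟩ := hstep u₀ hu₀
      haveI : Nonempty E := ⟨e₁⟩
      set g : V → E := fun u =>
        if h : u ∈ Vc.filter (fun v => v ∉ T) then (hstep u h).choose
        else Classical.arbitrary E with hg
      refine Finset.card_le_card_of_injOn g (fun u hu => ?_) ?_
      · rw [hg]; simp only [Finset.mem_coe] at hu ⊢; simp only [hu, dif_pos]
        exact (hstep u hu).choose_spec.1
      · intro u₁ h₁ u₂ h₂ heq
        simp only [Finset.coe_filter, Set.mem_setOf_eq] at h₁ h₂
        have h₁' : u₁ ∈ Vc.filter (fun v => v ∉ T) := Finset.mem_filter.mpr h₁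
        have h₂' : u₂ ∈ Vc.filter (fun v => v ∉ T) := Finset.mem_filter.mpr h₂
        rw [hg] at heq
        simp only [h₁', h₂', dif_pos] at heq
        obtain ⟨-, a, ha, hda⟩ := (hstep u₁ h₁').choose_spec
        obtain ⟨-, b, hb, hdb⟩ := (hstep u₂ h₂').choose_spec
        rw [heq, hb] at ha
        rw [Sym2.eq_iff] at ha
        rcases ha with ⟨h, -⟩ | ⟨hu, hv⟩
        · exact h.symm
        · subst hu; subst hv; omega
    · rw [Finset.not_nonempty_iff_eq_empty] at hempty
      rw [hempty]; simp
  -- arithmetic conclusion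
  have h1 : (Ec.filter (fun e => e ∈ A)).card + (Ec.filter (fun e => e ∉ A)).card = Ec.card :=
    Finset.card_filter_add_card_filter_not _
  have h2 : (Vc.filter (fun v => v ∈ T)).card + (Vc.filter (fun v => v ∉ T)).card = Vc.card :=
    Finset.card_filter_add_card_filter_not _
  omega

/-- `G` decomposes into `k` edge-disjoint spanning pseudoforests iff every vertex
subset `S` spans at most `k|S|` edges. -/
theorem stmt12 [Fintype V] [Fintype E] (k : ℕ) (hk : 0 < k) (ends : E → Sym2 V) :
    (∃ col : E → Fin k, ∀ i : Fin k,
        IsPseudoforest ends (Finset.univ.filter (fun e => col e = i))) ↔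
      ∀ S : Finset V, (spanned ends Finset.univ S).card ≤ k * S.card := by
  constructor
  · rintro ⟨col, hcol⟩ S
    have hsum : (spanned ends Finset.univ S).card =
        ∑ i : Fin k, ((spanned ends Finset.univ S).filter (fun e => col e = i)).card :=
      Finset.card_eq_sum_card_fiberwise (fun e _ => Finset.mem_univ _)
    rw [hsum]
    have hbound : ∀ i : Fin k,
        ((spanned ends Finset.univ S).filter (fun e => col e = i)).card ≤ S.card := by
      intro i
      refine pseudoforest_card_bound ends _ (hcol i) _ ?_ S ?_
      · intro e he
        simp only [spanned, Finset.mem_filter] at he ⊢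
        exact ⟨Finset.mem_univ _, he.2⟩
      · intro e he v hv
        simp only [spanned, Finset.mem_filter] at he
        exact he.1.2 v hv
    calc ∑ i : Fin k, ((spanned ends Finset.univ S).filter (fun e => col e = i)).card
        ≤ ∑ _i : Fin k, S.card := Finset.sum_le_sum (fun i _ => hbound i)
      _ = k * S.card := by simp [Finset.sum_const, mul_comm]
  · intro h
    set t : E → Finset (V × Fin k) := fun e =>
      (Finset.univ.filter (fun v => v ∈ ends e)) ×ˢ Finset.univ with ht
    have hall : ∀ A : Finset E, A.card ≤ (A.biUnion t).card := by
      intro A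
      set T : Finset V := Finset.univ.filter (fun v => ∃ e ∈ A, v ∈ ends e) with hT
      have hbi : A.biUnion t = T ×ˢ Finset.univ := by
        ext ⟨v, i⟩
        simp only [ht, hT, Finset.mem_biUnion, Finset.mem_product, Finset.mem_filter,
          Finset.mem_univ, true_and, and_true]
      rw [hbi, Finset.card_product]
      have hsub : A ⊆ spanned ends Finset.univ T := by
        intro e he
        simp only [spanned, Finset.mem_filter]
        refine ⟨Finset.mem_univ _, fun v hv => ?_⟩
        rw [hT, Finset.mem_filter]
        exact ⟨Finset.mem_univ _, e, he, hv⟩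
      calc A.card ≤ (spanned ends Finset.univ T).card := Finset.card_le_card hsub
        _ ≤ k * T.card := h T
        _ = T.card * Finset.univ.card := by
            simp [Finset.card_univ, mul_comm]
    obtain ⟨f, hfinj, hft⟩ := (Finset.all_card_le_biUnion_card_iff_exists_injective t).mp hall
    have hfst : ∀ e, (f e).1 ∈ ends e := by
      intro e
      have := hft e
      rw [ht] at this
      simp only [Finset.mem_product, Finset.mem_filter, Finset.mem_univ, true_and,
        and_true] at this
      exact this
    refine ⟨fun e => (f e).2, fun i => ?_⟩
    intro v
    refine Finset.card_le_card_of_injOn (fun e => (f e).1) ?_ ?_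
    · intro e he
      rw [Finset.mem_coe, Finset.mem_filter] at he ⊢
      exact ⟨Finset.mem_univ _, he.2 _ (hfst e)⟩
    · intro e₁ h₁ e₂ h₂ heq
      simp only [Finset.coe_filter, Set.mem_setOf_eq, Finset.mem_filter] at h₁ h₂
      apply hfinj
      have hc₁ : (f e₁).2 = i := h₁.1.2
      have hc₂ : (f e₂).2 = i := h₂.1.2
      exact Prod.ext heq (hc₁.trans hc₂.symm)
end
end

section
/- A finite multigraph G admits an orientation in which every vertex has out-degree exactly k if and only if G has exactly k|V| edges and every vertex subset V' spans at most k|V'| edges. -/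
open scoped Classical

noncomputable section

/- We model a finite multigraph as a vertex type `V`, an edge (index) type `E`,
and an endpoint map `ends : E → Sym2 V`; loops are edges whose endpoints form a
diagonal unordered pair.  A (sub)graph is given by a `Finset` of edge indices. -/

variable {V E : Type*}

/-- `G` admits an orientation with out-degree exactly `k` at every vertex iff
`G` has exactly `k|V|` edges and every vertex subset `S` spans at most `k|S|` edges. -/
theorem stmt13 [Fintype V] [Fintype E] (k : ℕ) (ends : E → Sym2 V) :
    (∃ tail : E → V, (∀ e, tail e ∈ ends e) ∧
        ∀ v : V, (Finset.univ.filter (fun e => tail e = v)).card = k) ↔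
      (Fintype.card E = k * Fintype.card V ∧
        ∀ S : Finset V, (spanned ends Finset.univ S).card ≤ k * S.card) := by

  constructor
  · rintro ⟨tail, hmem, hdeg⟩
    constructor
    · rw [← Finset.card_univ (α := E),
        Finset.card_eq_sum_card_fiberwise (f := tail) (t := Finset.univ)
          (fun e _ => Finset.mem_univ _)]
      simp [hdeg, mul_comm]
    · intro S
      have hsub : spanned ends Finset.univ S ⊆ Finset.univ.filter (fun e => tail e ∈ S) := by
        intro e he
        simp only [spanned, Finset.mem_filter] at he ⊢
        exact ⟨Finset.mem_univ _, he.2 _ (hmem e)⟩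
      refine le_trans (Finset.card_le_card hsub) ?_
      rw [Finset.card_eq_sum_card_fiberwise (f := tail) (s := Finset.univ.filter (fun e => tail e ∈ S)) (t := S)
          (fun e he => (Finset.mem_filter.mp he).2)]
      have : ∀ v ∈ S, ((Finset.univ.filter (fun e => tail e ∈ S)).filter
          (fun e => tail e = v)).card = k := by
        intro v hv
        rw [Finset.filter_filter]
        rw [← hdeg v]
        congr 1
        apply Finset.filter_congr
        intro e _
        constructor
        · rintro ⟨-, h⟩; exact h
        · rintro h; exact ⟨h ▸ hv, h⟩
      rw [Finset.sum_congr rfl this, Finset.sum_const, smul_eq_mul, mul_comm]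
  · rintro ⟨hcard, hsparse⟩
    set t : E → Finset (V × Fin k) := fun e => (Finset.univ.filter (fun v => v ∈ ends e)) ×ˢ Finset.univ with ht
    have hall : ∀ s : Finset E, s.card ≤ (s.biUnion t).card := by
      intro s
      have hU : s.biUnion t = (s.biUnion fun e => Finset.univ.filter (fun v => v ∈ ends e)) ×ˢ Finset.univ := by
        ext ⟨v, i⟩
        simp only [ht, Finset.mem_biUnion, Finset.mem_product, Finset.mem_filter,
          Finset.mem_univ, and_true, true_and]
      set S := s.biUnion fun e => Finset.univ.filter (fun v => v ∈ ends e) with hS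
      have hsub : s ⊆ spanned ends Finset.univ S := by
        intro e he
        simp only [spanned, Finset.mem_filter]
        refine ⟨Finset.mem_univ _, fun v hv => ?_⟩
        exact Finset.mem_biUnion.mpr ⟨e, he, Finset.mem_filter.mpr ⟨Finset.mem_univ _, hv⟩⟩
      calc s.card ≤ k * S.card := le_trans (Finset.card_le_card hsub) (hsparse S)
        _ = (s.biUnion t).card := by
            rw [hU, Finset.card_product, Finset.card_univ, Fintype.card_fin, mul_comm]
    obtain ⟨f, hinj, hf⟩ := (Finset.all_card_le_biUnion_card_iff_exists_injective t).mp hall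
    have hbij : Function.Bijective f := by
      rw [Fintype.bijective_iff_injective_and_card]
      refine ⟨hinj, ?_⟩
      simp [hcard, Fintype.card_prod, mul_comm]
    refine ⟨fun e => (f e).1, fun e => ?_, fun v => ?_⟩
    · have := hf e
      simp only [ht, Finset.mem_product, Finset.mem_filter, Finset.mem_univ, true_and] at this
      exact this.1
    · have himg : (Finset.univ.filter (fun e => (f e).1 = v)).image f
          = Finset.univ.filter (fun w : V × Fin k => w.1 = v) := by
        ext w
        simp only [Finset.mem_image, Finset.mem_filter, Finset.mem_univ, true_and]
        constructor
        · rintro ⟨e, he, rfl⟩; exact he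
        · rintro hw
          obtain ⟨e, rfl⟩ := hbij.2 w
          exact ⟨e, hw, rfl⟩
      have h1 : (Finset.univ.filter (fun e => (f e).1 = v)).card
          = (Finset.univ.filter (fun w : V × Fin k => w.1 = v)).card := by
        rw [← himg, Finset.card_image_of_injective _ hinj]
      rw [h1]
      have h2 : Finset.univ.filter (fun w : V × Fin k => w.1 = v)
          = {v} ×ˢ Finset.univ := by
        ext ⟨u, i⟩
        simp [eq_comm]
      rw [h2, Finset.card_product]
      simp
end
end
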